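/- arXiv:1902.01891 — 6 statements merged into one kernel-verified Lean document; each statement's English description precedes it below -/
import Mathlib

section
/- Let F be a field with char(F) ≠ 2 and let * be an involution of the first kind on UT_2(F), i.e., an F-linear map *: UT_2(F) → UT_2(F) with (uv)* = v*u* and (u*)* = u for all u, v, which fixes every element of the center of UT_2(F). Then (UT_2(F), *) is isomorphic as an algebra with involution either to (UT_2(F), ⋆) or to (UT_2(F), s); moreover, (UT_2(F), ⋆) and (UT_2(F), s) are not isomorphic as algebras with involution. -/
open scoped BigOperators

set_option maxHeartbeats 1000000
set_option synthInstance.maxHeartbeats 400000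

/-- The algebra of 2×2 upper triangular matrices over `F`. -/
def UT2 (F : Type*) [Field F] : Subalgebra F (Matrix (Fin 2) (Fin 2) F) where
  carrier := {M | M 1 0 = 0}
  mul_mem' := by
    intro a b ha hb
    simp only [Set.mem_setOf_eq] at *
    rw [Matrix.mul_apply, Fin.sum_univ_two, ha, hb]
    ring
  one_mem' := by simp [Matrix.one_apply]
  add_mem' := by
    intro a b ha hb
    simp only [Set.mem_setOf_eq] at *
    simp [Matrix.add_apply, ha, hb]
  zero_mem' := by simp
  algebraMap_mem' := by
    intro r
    simp [Matrix.algebraMap_matrix_apply]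

theorem mem_UT2 (F : Type*) [Field F] {M : Matrix (Fin 2) (Fin 2) F} :
    M ∈ UT2 F ↔ M 1 0 = 0 := Iff.rfl

/-- The involution `⋆` on `UT2 F`: `(a c; 0 b) ↦ (b c; 0 a)`. -/
def starUT (F : Type*) [Field F] (M : ↥(UT2 F)) : ↥(UT2 F) :=
  ⟨!![M.1 1 1, M.1 0 1; 0, M.1 0 0], by rw [mem_UT2]; simp⟩

/-- The involution `s` on `UT2 F`: `(a c; 0 b) ↦ (b -c; 0 a)`. -/
def starS (F : Type*) [Field F] (M : ↥(UT2 F)) : ↥(UT2 F) :=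
  ⟨!![M.1 1 1, -(M.1 0 1); 0, M.1 0 0], by rw [mem_UT2]; simp⟩

/-- The free unital associative `F`-algebra `F⟨Y ∪ Z⟩` on the variables
`y_0, y_1, …` (indexed by `Sum.inl`) and `z_0, z_1, …` (indexed by `Sum.inr`). -/
abbrev FA (F : Type*) [Field F] := FreeAlgebra F (ℕ ⊕ ℕ)

noncomputable def yv (F : Type*) [Field F] (i : ℕ) : FA F := FreeAlgebra.ι F (Sum.inl i)
noncomputable def zv (F : Type*) [Field F] (i : ℕ) : FA F := FreeAlgebra.ι F (Sum.inr i)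

noncomputable def fStarAux (F : Type*) [Field F] : FA F →ₐ[F] (FA F)ᵐᵒᵖ :=
  FreeAlgebra.lift F fun v =>
    MulOpposite.op (Sum.elim (fun i => FreeAlgebra.ι F (Sum.inl i))
      (fun i => -FreeAlgebra.ι F (Sum.inr i)) v)

/-- The involution `*` on `F⟨Y ∪ Z⟩`: the unique `F`-linear anti-automorphism
with `y_i* = y_i` and `z_i* = -z_i`. -/
noncomputable def fStar (F : Type*) [Field F] (f : FA F) : FA F := (fStarAux F f).unop

/-- A symmetric polynomial of `F⟨Y ∪ Z⟩`. -/
def IsSym (F : Type*) [Field F] (f : FA F) : Prop := fStar F f = f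
/-- A skew polynomial of `F⟨Y ∪ Z⟩`. -/
def IsSkew (F : Type*) [Field F] (f : FA F) : Prop := fStar F f = -f

/-- A substitution relative to an involution `σ` on `UT2 F`: an algebra homomorphism
sending each `y_i` to a symmetric element and each `z_i` to a skew-symmetric element. -/
def IsSubstWith (F : Type*) [Field F] (σ : ↥(UT2 F) → ↥(UT2 F))
    (φ : FA F →ₐ[F] ↥(UT2 F)) : Prop :=
  (∀ i, σ (φ (yv F i)) = φ (yv F i)) ∧ (∀ i, σ (φ (zv F i)) = -(φ (zv F i)))

/-- The `*`-polynomial identities of `(UT2 F, σ)`. -/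
def IdWith (F : Type*) [Field F] (σ : ↥(UT2 F) → ↥(UT2 F)) : Submodule F (FA F) where
  carrier := {f | ∀ φ : FA F →ₐ[F] ↥(UT2 F), IsSubstWith F σ φ → φ f = 0}
  add_mem' := by
    intro a b ha hb φ hφ
    rw [map_add, ha φ hφ, hb φ hφ, add_zero]
  zero_mem' := by intro φ _; exact map_zero φ
  smul_mem' := by
    intro c x hx φ hφ
    rw [map_smul, hx φ hφ, smul_zero]

/-- The `*`-central polynomials of `(UT2 F, σ)`. -/
def CWith (F : Type*) [Field F] (σ : ↥(UT2 F) → ↥(UT2 F)) : Submodule F (FA F) where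
  carrier := {f | ∀ φ : FA F →ₐ[F] ↥(UT2 F), IsSubstWith F σ φ →
    φ f ∈ Subalgebra.center F ↥(UT2 F)}
  add_mem' := by
    intro a b ha hb φ hφ
    rw [map_add]; exact add_mem (ha φ hφ) (hb φ hφ)
  zero_mem' := by intro φ _; rw [map_zero]; exact zero_mem _
  smul_mem' := by
    intro c x hx φ hφ
    rw [map_smul]; exact Subalgebra.smul_mem _ (hx φ hφ) c

/-- `⟨z₁z₂⟩^{TS(*)}`: the `F`-linear span of all products of two skew polynomials. -/
def TSz (F : Type*) [Field F] : Submodule F (FA F) :=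
  Submodule.span F {f : FA F | ∃ u v, IsSkew F u ∧ IsSkew F v ∧ f = u * v}

namespace StmtAux
variable {F : Type*} [Field F]

def e0 (u : ↥(UT2 F)) : F := u.1 0 0
def e1 (u : ↥(UT2 F)) : F := u.1 0 1
def e2 (u : ↥(UT2 F)) : F := u.1 1 1

lemma lo (u : ↥(UT2 F)) : u.1 1 0 = 0 := u.2

lemma ext' {u v : ↥(UT2 F)} (h0 : e0 u = e0 v) (h1 : e1 u = e1 v)
    (h2 : e2 u = e2 v) : u = v := by
  apply Subtype.ext
  ext i j
  fin_cases i <;> fin_cases j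
  · exact h0
  · exact h1
  · show u.1 1 0 = v.1 1 0
    rw [lo u, lo v]
  · exact h2

lemma e0_mul (u v : ↥(UT2 F)) : e0 (u * v) = e0 u * e0 v := by
  show ((u * v : ↥(UT2 F)) : Matrix (Fin 2) (Fin 2) F) 0 0 = _
  rw [MulMemClass.coe_mul, Matrix.mul_apply, Fin.sum_univ_two, lo v]
  simp [e0]

lemma e1_mul (u v : ↥(UT2 F)) : e1 (u * v) = e0 u * e1 v + e1 u * e2 v := by
  show ((u * v : ↥(UT2 F)) : Matrix (Fin 2) (Fin 2) F) 0 1 = _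
  rw [MulMemClass.coe_mul, Matrix.mul_apply, Fin.sum_univ_two]
  simp [e0, e1, e2]

lemma e2_mul (u v : ↥(UT2 F)) : e2 (u * v) = e2 u * e2 v := by
  show ((u * v : ↥(UT2 F)) : Matrix (Fin 2) (Fin 2) F) 1 1 = _
  rw [MulMemClass.coe_mul, Matrix.mul_apply, Fin.sum_univ_two, lo u]
  simp [e2]

lemma e0_add (u v : ↥(UT2 F)) : e0 (u + v) = e0 u + e0 v := rfl
lemma e1_add (u v : ↥(UT2 F)) : e1 (u + v) = e1 u + e1 v := rfl
lemma e2_add (u v : ↥(UT2 F)) : e2 (u + v) = e2 u + e2 v := rfl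
lemma e0_smul (c : F) (u : ↥(UT2 F)) : e0 (c • u) = c * e0 u := rfl
lemma e1_smul (c : F) (u : ↥(UT2 F)) : e1 (c • u) = c * e1 u := rfl
lemma e2_smul (c : F) (u : ↥(UT2 F)) : e2 (c • u) = c * e2 u := rfl
lemma e0_sub (u v : ↥(UT2 F)) : e0 (u - v) = e0 u - e0 v := rfl
lemma e1_sub (u v : ↥(UT2 F)) : e1 (u - v) = e1 u - e1 v := rfl
lemma e2_sub (u v : ↥(UT2 F)) : e2 (u - v) = e2 u - e2 v := rfl

lemma e0_one : e0 (1 : ↥(UT2 F)) = 1 := by simp [e0, Matrix.one_apply]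
lemma e1_one : e1 (1 : ↥(UT2 F)) = 0 := by simp [e1, Matrix.one_apply]
lemma e2_one : e2 (1 : ↥(UT2 F)) = 1 := by simp [e2, Matrix.one_apply]
lemma e0_zero : e0 (0 : ↥(UT2 F)) = 0 := rfl
lemma e1_zero : e1 (0 : ↥(UT2 F)) = 0 := rfl
lemma e2_zero : e2 (0 : ↥(UT2 F)) = 0 := rfl

lemma e0_starUT (u : ↥(UT2 F)) : e0 (starUT F u) = e2 u := by simp [e0, e2, starUT]
lemma e1_starUT (u : ↥(UT2 F)) : e1 (starUT F u) = e1 u := by simp [e1, starUT]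
lemma e2_starUT (u : ↥(UT2 F)) : e2 (starUT F u) = e0 u := by simp [e0, e2, starUT]
lemma e0_starS (u : ↥(UT2 F)) : e0 (starS F u) = e2 u := by simp [e0, e2, starS]
lemma e1_starS (u : ↥(UT2 F)) : e1 (starS F u) = -(e1 u) := by simp [e1, starS]
lemma e2_starS (u : ↥(UT2 F)) : e2 (starS F u) = e0 u := by simp [e0, e2, starS]

def E1' : ↥(UT2 F) := ⟨!![1,0;0,0], by rw [mem_UT2]; simp⟩
def N' : ↥(UT2 F) := ⟨!![0,1;0,0], by rw [mem_UT2]; simp⟩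
def E2' : ↥(UT2 F) := ⟨!![0,0;0,1], by rw [mem_UT2]; simp⟩

@[simp] lemma e0_E1 : e0 (E1' : ↥(UT2 F)) = 1 := by simp [e0, E1']
@[simp] lemma e1_E1 : e1 (E1' : ↥(UT2 F)) = 0 := by simp [e1, E1']
@[simp] lemma e2_E1 : e2 (E1' : ↥(UT2 F)) = 0 := by simp [e2, E1']
@[simp] lemma e0_N : e0 (N' : ↥(UT2 F)) = 0 := by simp [e0, N']
@[simp] lemma e1_N : e1 (N' : ↥(UT2 F)) = 1 := by simp [e1, N']
@[simp] lemma e2_N : e2 (N' : ↥(UT2 F)) = 0 := by simp [e2, N']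
@[simp] lemma e0_E2 : e0 (E2' : ↥(UT2 F)) = 0 := by simp [e0, E2']
@[simp] lemma e1_E2 : e1 (E2' : ↥(UT2 F)) = 0 := by simp [e1, E2']
@[simp] lemma e2_E2 : e2 (E2' : ↥(UT2 F)) = 1 := by simp [e2, E2']

lemma decomp (u : ↥(UT2 F)) : u = e0 u • E1' + e1 u • N' + e2 u • E2' := by
  apply ext' <;>
    simp [e0_add, e1_add, e2_add, e0_smul, e1_smul, e2_smul]

def shearFun (t : F) (u : ↥(UT2 F)) : ↥(UT2 F) :=
  ⟨!![e0 u, e1 u + t * (e2 u - e0 u); 0, e2 u], by rw [mem_UT2]; simp⟩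

@[simp] lemma e0_shearFun (t : F) (u : ↥(UT2 F)) : e0 (shearFun t u) = e0 u := by
  simp [e0, shearFun]
@[simp] lemma e1_shearFun (t : F) (u : ↥(UT2 F)) :
    e1 (shearFun t u) = e1 u + t * (e2 u - e0 u) := by simp [e1, shearFun]
@[simp] lemma e2_shearFun (t : F) (u : ↥(UT2 F)) : e2 (shearFun t u) = e2 u := by
  simp [e2, shearFun]

lemma e0_algebraMap (r : F) : e0 ((algebraMap F ↥(UT2 F)) r) = r := by
  show (algebraMap F (Matrix (Fin 2) (Fin 2) F) r) 0 0 = r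
  simp [Matrix.algebraMap_matrix_apply]

lemma e1_algebraMap (r : F) : e1 ((algebraMap F ↥(UT2 F)) r) = 0 := by
  show (algebraMap F (Matrix (Fin 2) (Fin 2) F) r) 0 1 = 0
  simp [Matrix.algebraMap_matrix_apply]

lemma e2_algebraMap (r : F) : e2 ((algebraMap F ↥(UT2 F)) r) = r := by
  show (algebraMap F (Matrix (Fin 2) (Fin 2) F) r) 1 1 = r
  simp [Matrix.algebraMap_matrix_apply]

def shear (t : F) : ↥(UT2 F) ≃ₐ[F] ↥(UT2 F) where
  toFun := shearFun t
  invFun := shearFun (-t)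
  left_inv u := by apply ext' <;> simp <;> ring
  right_inv u := by apply ext' <;> simp <;> ring
  map_mul' u v := by
    apply ext' <;>
      simp [e0_mul, e1_mul, e2_mul] <;> ring
  map_add' u v := by
    apply ext' <;> simp [e0_add, e1_add, e2_add] <;> ring
  commutes' r := by
    apply ext' <;> simp [e0_algebraMap, e1_algebraMap, e2_algebraMap]

@[simp] lemma shear_apply (t : F) (u : ↥(UT2 F)) : shear t u = shearFun t u := rfl

end StmtAux
theorem stmt_0 (F : Type*) [Field F] (hchar : ringChar F ≠ 2)
    (σ : ↥(UT2 F) →ₗ[F] ↥(UT2 F))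
    (hmul : ∀ u v : ↥(UT2 F), σ (u * v) = σ v * σ u)
    (hinv : ∀ u : ↥(UT2 F), σ (σ u) = u)
    (hcen : ∀ u ∈ Subalgebra.center F ↥(UT2 F), σ u = u) :
    ((∃ φ : ↥(UT2 F) ≃ₐ[F] ↥(UT2 F), ∀ u, φ (σ u) = starUT F (φ u)) ∨
      (∃ φ : ↥(UT2 F) ≃ₐ[F] ↥(UT2 F), ∀ u, φ (σ u) = starS F (φ u))) ∧
    ¬(∃ φ : ↥(UT2 F) ≃ₐ[F] ↥(UT2 F), ∀ u, φ (starUT F u) = starS F (φ u)) := by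
  open StmtAux in
  have h2 : (2 : F) ≠ 0 := Ring.two_ne_zero hchar
  have hNNz : (N' : ↥(UT2 F)) * N' = 0 := by
    apply ext' <;> simp [e0_mul, e1_mul, e2_mul, e0_zero, e1_zero, e2_zero]
  constructor
  · -- classification
    have hσ1 : σ 1 = 1 := hcen 1 (one_mem _)
    have hE2 : σ E2' = 1 - σ E1' := by
      have hsum : (E1' : ↥(UT2 F)) + E2' = 1 := by
        apply ext' <;> simp [e0_add, e1_add, e2_add, e0_one, e1_one, e2_one]
      have h := congrArg σ hsum
      rw [map_add, hσ1] at h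
      exact eq_sub_of_add_eq' h
    have hEE : (E1' : ↥(UT2 F)) * E1' = E1' := by
      apply ext' <;> simp [e0_mul, e1_mul, e2_mul]
    have hNE : (N' : ↥(UT2 F)) * E1' = 0 := by
      apply ext' <;> simp [e0_mul, e1_mul, e2_mul, e0_zero, e1_zero, e2_zero]
    have hEN : (E1' : ↥(UT2 F)) * N' = N' := by
      apply ext' <;> simp [e0_mul, e1_mul, e2_mul]
    set sE := σ E1' with hsE
    set sN := σ N' with hsN
    have mE : sE * sE = sE := by rw [← hmul E1' E1', hEE]
    have mNN : sN * sN = 0 := by rw [← hmul N' N', hNNz, map_zero]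
    have mEN : sE * sN = 0 := by rw [← hmul N' E1', hNE, map_zero]
    have sigma_apply : ∀ u : ↥(UT2 F),
        σ u = e0 u • sE + e1 u • sN + e2 u • (1 - sE) := by
      intro u
      conv_lhs => rw [decomp u]
      rw [map_add, map_add, map_smul, map_smul, map_smul, hE2]
    have hx0 : e0 sN = 0 := by
      have h := congrArg e0 mNN
      rw [e0_mul, e0_zero] at h
      exact mul_self_eq_zero.mp h
    have hz0 : e2 sN = 0 := by
      have h := congrArg e2 mNN
      rw [e2_mul, e2_zero] at h
      exact mul_self_eq_zero.mp h
    have hdd : e2 sE * e2 sE = e2 sE := by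
      have h := congrArg e2 mE; rwa [e2_mul] at h
    have hay : e0 sE * e1 sN = 0 := by
      have h := congrArg e1 mEN
      rw [e1_mul, e1_zero] at h
      linear_combination h - e1 sE * hz0
    have hσσN : σ sN = N' := hinv N'
    have hyy : e1 sN * e1 sN = 1 := by
      have h := congrArg e1 hσσN
      rw [sigma_apply sN, e1_add, e1_add, e1_smul, e1_smul, e1_smul,
        e1_sub, e1_one, e1_N] at h
      linear_combination h - e1 sE * hx0 + e1 sE * hz0
    have hσσE : σ sE = E1' := hinv E1'
    have e0σσE : e0 sE * e0 sE + e1 sE * e0 sN + e2 sE * (1 - e0 sE) = 1 := by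
      have h := congrArg e0 hσσE
      rw [sigma_apply sE, e0_add, e0_add, e0_smul, e0_smul, e0_smul,
        e0_sub, e0_one, e0_E1] at h
      linear_combination h
    have e1σσE : e0 sE * e1 sE + e1 sE * e1 sN + e2 sE * (0 - e1 sE) = 0 := by
      have h := congrArg e1 hσσE
      rw [sigma_apply sE, e1_add, e1_add, e1_smul, e1_smul, e1_smul,
        e1_sub, e1_one, e1_E1] at h
      linear_combination h
    have ha0 : e0 sE = 0 := by
      calc e0 sE = e0 sE * (e1 sN * e1 sN) := by rw [hyy, mul_one]
        _ = (e0 sE * e1 sN) * e1 sN := by ring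
        _ = 0 := by rw [hay, zero_mul]
    have hd1 : e2 sE = 1 := by
      linear_combination e0σσE - e1 sE * hx0 + (e2 sE - e0 sE) * ha0
    have hby : e1 sE * e1 sN - e1 sE = 0 := by
      linear_combination e1σσE - e1 sE * ha0 + e1 sE * hd1
    have σ0 : ∀ u, e0 (σ u) = e2 u := by
      intro u
      rw [sigma_apply u, e0_add, e0_add, e0_smul, e0_smul, e0_smul,
        e0_sub, e0_one]
      linear_combination (e0 u - e2 u) * ha0 + e1 u * hx0
    have σ2 : ∀ u, e2 (σ u) = e0 u := by
      intro u
      rw [sigma_apply u, e2_add, e2_add, e2_smul, e2_smul, e2_smul,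
        e2_sub, e2_one]
      linear_combination (e0 u - e2 u) * hd1 + e1 u * hz0
    have σ1 : ∀ u, e1 (σ u) = e0 u * e1 sE + e1 u * e1 sN - e2 u * e1 sE := by
      intro u
      rw [sigma_apply u, e1_add, e1_add, e1_smul, e1_smul, e1_smul,
        e1_sub, e1_one]
      ring
    rcases mul_self_eq_one_iff.mp hyy with hy1 | hym1
    · -- e1 sN = 1 : isomorphic to starUT via shear (-(e1 sE / 2))
      left
      refine ⟨shear (-(e1 sE / 2)), fun u => ?_⟩
      have hbt : e1 sE / 2 * 2 = e1 sE := div_mul_cancel₀ _ h2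
      apply ext'
      · rw [shear_apply, shear_apply, e0_shearFun, e0_starUT, e2_shearFun, σ0]
      · rw [shear_apply, shear_apply, e1_shearFun, e1_starUT, e1_shearFun,
          σ0, σ1, σ2, hy1]
        linear_combination (e2 u - e0 u) * hbt
      · rw [shear_apply, shear_apply, e2_shearFun, e2_starUT, e0_shearFun, σ2]
    · -- e1 sN = -1 : then e1 sE = 0 and σ = starS
      right
      have hb2 : e1 sE * 2 = 0 := by
        linear_combination e1 sE * hym1 - hby
      have hb0 : e1 sE = 0 := (mul_eq_zero.mp hb2).resolve_right h2
      refine ⟨AlgEquiv.refl, fun u => ?_⟩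
      show σ u = starS F u
      apply ext'
      · rw [σ0, e0_starS]
      · rw [σ1, e1_starS, hb0, hym1]; ring
      · rw [σ2, e2_starS]
  · -- non-isomorphism
    rintro ⟨φ, hφ⟩
    have hNstar : starUT F N' = N' := by
      apply ext' <;> simp [e0_starUT, e1_starUT, e2_starUT]
    have hv := hφ N'
    rw [hNstar] at hv
    set v := φ N' with hvdef
    have hvv : v * v = 0 := by
      rw [← map_mul, hNNz, map_zero]
    have he1two : e1 v * 2 = 0 := by
      have h := congrArg e1 hv
      rw [e1_starS] at h
      linear_combination h
    have he1 : e1 v = 0 := (mul_eq_zero.mp he1two).resolve_right h2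
    have he0 : e0 v = 0 := by
      have h := congrArg e0 hvv
      rw [e0_mul, e0_zero] at h
      exact mul_self_eq_zero.mp h
    have he2 : e2 v = 0 := by
      have h := congrArg e0 hv
      rw [e0_starS] at h
      rw [← h, he0]
    have hv0 : v = 0 := by
      apply ext' <;> simp [he0, he1, he2, e0_zero, e1_zero, e2_zero]
    have hN0 : (N' : ↥(UT2 F)) = 0 := by
      apply φ.injective
      rw [← hvdef, hv0, map_zero]
    have h := congrArg e1 hN0
    rw [e1_N, e1_zero] at h
    exact one_ne_zero h
end

section
/- Let F be a field with char(F) ≠ 2. Let Y ∈ UT_2(F) be symmetric for ⋆ and let Z_1, …, Z_{m+1} ∈ UT_2(F) be skew-symmetric for ⋆. Then: (i) for every permutation σ of {1, …, m+1}, Z_{σ(1)}⋯Z_{σ(m)}(Z_{σ(m+1)}Y − Y Z_{σ(m+1)}) = Z_1⋯Z_m(Z_{m+1}Y − Y Z_{m+1}); and (ii) for every 0 ≤ i ≤ m, Z_1⋯Z_m(Z_{m+1}Y − Y Z_{m+1}) = (−1)^{m−i} Z_1⋯Z_i(Z_{m+1}Y − Y Z_{m+1})Z_{i+1}⋯Z_m.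 -/
open scoped BigOperators

set_option maxHeartbeats 1000000
set_option synthInstance.maxHeartbeats 400000

section Helpers

variable {F : Type*} [Field F]

/-- A strictly upper triangular matrix with `(0,1)` entry `t`, as an element of `UT2 F`. -/
def Nmat (F : Type*) [Field F] (t : F) : ↥(UT2 F) :=
  ⟨!![0, t; 0, 0], by rw [mem_UT2]; simp⟩

lemma neg_Nmat (t : F) : -Nmat F t = Nmat F (-t) := by
  apply Subtype.ext
  show -(!![0, t; 0, 0]) = !![0, -t; 0, 0]
  ext i j
  fin_cases i <;> fin_cases j <;> simp [Nmat]

lemma mul_Nmat (u : ↥(UT2 F)) (t : F) :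
    u * Nmat F t = Nmat F (u.1 0 0 * t) := by
  have h10 : u.1 1 0 = 0 := u.2
  apply Subtype.ext
  show u.1 * !![0, t; 0, 0] = !![0, u.1 0 0 * t; 0, 0]
  ext i j
  fin_cases i <;> fin_cases j <;>
    simp [Matrix.mul_apply, Fin.sum_univ_two, h10]

lemma Nmat_mul (u : ↥(UT2 F)) (t : F) :
    Nmat F t * u = Nmat F (u.1 1 1 * t) := by
  have h10 : u.1 1 0 = 0 := u.2
  apply Subtype.ext
  show !![0, t; 0, 0] * u.1 = !![0, u.1 1 1 * t; 0, 0]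
  ext i j
  fin_cases i <;> fin_cases j <;>
    simp [Matrix.mul_apply, Fin.sum_univ_two, h10, mul_comm]

lemma list_mul_Nmat (l : List ↥(UT2 F)) (t : F) :
    l.prod * Nmat F t = Nmat F ((l.map (fun u => u.1 0 0)).prod * t) := by
  induction l with
  | nil => simp
  | cons u l ih =>
      rw [List.prod_cons, List.map_cons, List.prod_cons, mul_assoc, ih, mul_Nmat, mul_assoc]

lemma Nmat_mul_list (l : List ↥(UT2 F)) (t : F) :
    Nmat F t * l.prod = Nmat F ((l.map (fun u => u.1 1 1)).prod * t) := by
  induction l generalizing t with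
  | nil => simp
  | cons u l ih =>
      rw [List.prod_cons, List.map_cons, List.prod_cons, ← mul_assoc, Nmat_mul, ih]
      exact congrArg (Nmat F) (by ring)

lemma neg_one_pow_mul_Nmat (k : ℕ) (t : F) :
    (-1 : ↥(UT2 F)) ^ k * Nmat F t = Nmat F ((-1 : F) ^ k * t) := by
  induction k generalizing t with
  | zero => simp
  | succ k ih =>
      have h1 : (-1 : ↥(UT2 F)) * Nmat F t = Nmat F (-t) := by
        rw [neg_one_mul (Nmat F t), neg_Nmat]
      rw [pow_succ, mul_assoc, h1, ih]
      exact congrArg (Nmat F) (by ring)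

end Helpers

theorem stmt_2 (F : Type*) [Field F] (hchar : ringChar F ≠ 2) (m : ℕ)
    (Y : ↥(UT2 F)) (hY : starUT F Y = Y)
    (Z : Fin (m + 1) → ↥(UT2 F)) (hZ : ∀ i, starUT F (Z i) = -(Z i)) :
    (∀ σ : Equiv.Perm (Fin (m + 1)),
      (List.ofFn fun i : Fin m => Z (σ i.castSucc)).prod *
          (Z (σ (Fin.last m)) * Y - Y * Z (σ (Fin.last m))) =
        (List.ofFn fun i : Fin m => Z i.castSucc).prod *
          (Z (Fin.last m) * Y - Y * Z (Fin.last m))) ∧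
    (∀ i : ℕ, (h : i ≤ m) →
      (List.ofFn fun j : Fin m => Z j.castSucc).prod *
          (Z (Fin.last m) * Y - Y * Z (Fin.last m)) =
        (-1 : ↥(UT2 F)) ^ (m - i) *
          ((List.ofFn fun j : Fin i => Z (Fin.castLE (by omega) j)).prod *
            (Z (Fin.last m) * Y - Y * Z (Fin.last m)) *
            (List.ofFn fun j : Fin (m - i) => Z ⟨i + j.1, by have := j.2; omega⟩).prod)) := by
  classical
  have two_ne : (2 : F) ≠ 0 := Ring.two_ne_zero hchar
  have hy11 : Y.1 1 1 = Y.1 0 0 := by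
    have h := congrArg (fun u : ↥(UT2 F) => (u : Matrix (Fin 2) (Fin 2) F) 0 0) hY
    simpa [starUT] using h
  have hy10 : Y.1 1 0 = 0 := Y.2
  have hz10 : ∀ i, (Z i).1 1 0 = 0 := fun i => (Z i).2
  have hz11 : ∀ i, (Z i).1 1 1 = -(Z i).1 0 0 := by
    intro i
    have h := congrArg (fun u : ↥(UT2 F) => (u : Matrix (Fin 2) (Fin 2) F) 0 0) (hZ i)
    simpa [starUT] using h
  have hz01 : ∀ i, (Z i).1 0 1 = 0 := by
    intro i
    have h := congrArg (fun u : ↥(UT2 F) => (u : Matrix (Fin 2) (Fin 2) F) 0 1) (hZ i)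
    simp only [starUT] at h
    have h' : (Z i).1 0 1 = -(Z i).1 0 1 := by simpa using h
    have h2 : 2 * (Z i).1 0 1 = 0 := by linear_combination h'
    rcases mul_eq_zero.mp h2 with h3 | h3
    · exact absurd h3 two_ne
    · exact h3
  have hcomm : ∀ i, Z i * Y - Y * Z i = Nmat F (2 * (Z i).1 0 0 * Y.1 0 1) := by
    intro i
    apply Subtype.ext
    show (Z i).1 * Y.1 - Y.1 * (Z i).1 = !![0, 2 * (Z i).1 0 0 * Y.1 0 1; 0, 0]
    ext r s
    fin_cases r <;> fin_cases s <;>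
      simp [Matrix.mul_apply, Fin.sum_univ_two, hz01 i, hz11 i, hz10 i, hy10, hy11] <;>
      ring
  have main : ∀ σ : Equiv.Perm (Fin (m + 1)),
      (List.ofFn fun i : Fin m => Z (σ i.castSucc)).prod *
          (Z (σ (Fin.last m)) * Y - Y * Z (σ (Fin.last m))) =
        Nmat F ((∏ i, (Z i).1 0 0) * (2 * Y.1 0 1)) := by
    intro σ
    rw [hcomm, list_mul_Nmat, List.map_ofFn, List.prod_ofFn]
    refine congrArg (Nmat F) ?_
    simp only [Function.comp]
    have h1 : (∏ i : Fin m, (Z (σ i.castSucc)).1 0 0) * (Z (σ (Fin.last m))).1 0 0 =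
        ∏ i, (Z i).1 0 0 := by
      rw [← Fin.prod_univ_castSucc (fun i => (Z (σ i)).1 0 0)]
      exact Equiv.prod_comp σ (fun i => (Z i).1 0 0)
    calc (∏ i : Fin m, (Z (σ i.castSucc)).1 0 0) * (2 * (Z (σ (Fin.last m))).1 0 0 * Y.1 0 1)
        = ((∏ i : Fin m, (Z (σ i.castSucc)).1 0 0) * (Z (σ (Fin.last m))).1 0 0) *
            (2 * Y.1 0 1) := by ring
      _ = (∏ i, (Z i).1 0 0) * (2 * Y.1 0 1) := by rw [h1]
  constructor
  · intro σ
    have h2 := main 1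
    simp only [Equiv.Perm.coe_one, id] at h2
    exact (main σ).trans h2.symm
  · intro i hi
    have hsplit : (∏ j : Fin m, (Z j.castSucc).1 0 0) =
        (∏ j : Fin i, (Z (Fin.castLE (by omega) j)).1 0 0) *
          ∏ j : Fin (m - i), (Z ⟨i + j.1, by have := j.2; omega⟩).1 0 0 := by
      set b : ℕ → F := fun j => if h : j < m + 1 then (Z ⟨j, h⟩).1 0 0 else 1 with hb
      have e1 : ∀ j : Fin m, (Z j.castSucc).1 0 0 = b j.1 := by
        intro j
        rw [hb]
        simp only [dif_pos (show (j : ℕ) < m + 1 by omega)]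
        exact congrArg (fun x : Fin (m + 1) => (Z x).1 0 0) (Fin.ext rfl)
      have e2 : ∀ j : Fin i, (Z (Fin.castLE (by omega : i ≤ m + 1) j)).1 0 0 = b j.1 := by
        intro j
        rw [hb]
        simp only [dif_pos (show (j : ℕ) < m + 1 by omega)]
        exact congrArg (fun x : Fin (m + 1) => (Z x).1 0 0) (Fin.ext rfl)
      have e3 : ∀ j : Fin (m - i),
          (Z ⟨i + j.1, by have := j.2; omega⟩).1 0 0 = b (i + j.1) := by
        intro j
        rw [hb]
        simp only [dif_pos (show i + (j : ℕ) < m + 1 by have := j.2; omega)]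
      calc (∏ j : Fin m, (Z j.castSucc).1 0 0) = ∏ x ∈ Finset.range m, b x := by
            rw [← Fin.prod_univ_eq_prod_range b m]
            exact Finset.prod_congr rfl fun j _ => e1 j
        _ = ∏ x ∈ Finset.range (i + (m - i)), b x := by
            rw [Nat.add_sub_cancel' hi]
        _ = (∏ x ∈ Finset.range i, b x) * ∏ x ∈ Finset.range (m - i), b (i + x) :=
            Finset.prod_range_add b i (m - i)
        _ = (∏ j : Fin i, (Z (Fin.castLE (by omega : i ≤ m + 1) j)).1 0 0) *
              ∏ j : Fin (m - i), (Z ⟨i + j.1, by have := j.2; omega⟩).1 0 0 := by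
            rw [← Fin.prod_univ_eq_prod_range b i,
              ← Fin.prod_univ_eq_prod_range (fun x => b (i + x)) (m - i)]
            exact congrArg₂ (· * ·)
              (Finset.prod_congr rfl fun j _ => (e2 j).symm)
              (Finset.prod_congr rfl fun j _ => (e3 j).symm)
    have hneg : (∏ j : Fin (m - i), (Z ⟨i + j.1, by have := j.2; omega⟩).1 1 1) =
        (-1 : F) ^ (m - i) * ∏ j : Fin (m - i), (Z ⟨i + j.1, by have := j.2; omega⟩).1 0 0 := by
      calc (∏ j : Fin (m - i), (Z ⟨i + j.1, by have := j.2; omega⟩).1 1 1)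
          = ∏ j : Fin (m - i), (-1 : F) * (Z ⟨i + j.1, by have := j.2; omega⟩).1 0 0 := by
            refine Finset.prod_congr rfl fun j _ => ?_
            rw [hz11]
            ring
        _ = (∏ _j : Fin (m - i), (-1 : F)) *
              ∏ j : Fin (m - i), (Z ⟨i + j.1, by have := j.2; omega⟩).1 0 0 :=
            Finset.prod_mul_distrib
        _ = (-1 : F) ^ (m - i) * ∏ j : Fin (m - i),
              (Z ⟨i + j.1, by have := j.2; omega⟩).1 0 0 := by
            rw [Finset.prod_const, Finset.card_univ, Fintype.card_fin]
    have hk : (-1 : F) ^ (m - i) * (-1 : F) ^ (m - i) = 1 := by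
      rw [← pow_add]
      exact Even.neg_one_pow ⟨m - i, rfl⟩
    rw [hcomm, list_mul_Nmat, List.map_ofFn, List.prod_ofFn,
      list_mul_Nmat, List.map_ofFn, List.prod_ofFn,
      Nmat_mul_list, List.map_ofFn, List.prod_ofFn,
      neg_one_pow_mul_Nmat]
    refine congrArg (Nmat F) ?_
    simp only [Function.comp]
    rw [hsplit, hneg]
    linear_combination (-((∏ j : Fin i, (Z (Fin.castLE (by omega : i ≤ m + 1) j)).1 0 0) *
      (∏ j : Fin (m - i), (Z ⟨i + j.1, by have := j.2; omega⟩).1 0 0) *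
      (2 * (Z (Fin.last m)).1 0 0 * Y.1 0 1))) * hk
end

section
/- Let F be a field with char(F) ≠ 2 and let n ≥ 0. If Z_1, …, Z_{2n} ∈ UT_2(F) are skew-symmetric for ⋆, then the product Z_1 Z_2 ⋯ Z_{2n} lies in the center Z(UT_2(F)). -/
open scoped BigOperators

set_option maxHeartbeats 1000000
set_option synthInstance.maxHeartbeats 400000

lemma central_of_scalar (F : Type*) [Field F] (M : ↥(UT2 F))
    (h01 : M.1 0 1 = 0) (hd : M.1 1 1 = M.1 0 0) :
    M ∈ Subalgebra.center F ↥(UT2 F) := by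
  rw [Subalgebra.mem_center_iff]
  intro g
  apply Subtype.ext
  show g.1 * M.1 = M.1 * g.1
  have hg : g.1 1 0 = 0 := g.2
  have hm : M.1 1 0 = 0 := M.2
  ext i j
  fin_cases i <;> fin_cases j <;>
    simp [Matrix.mul_apply, Fin.sum_univ_two, h01, hd, hg, hm] <;> ring

lemma skew_entries (F : Type*) [Field F] (hchar : ringChar F ≠ 2)
    (x : ↥(UT2 F)) (hx : starUT F x = -x) :
    x.1 0 1 = 0 ∧ x.1 1 1 = -(x.1 0 0) := by
  have h2 : (2 : F) ≠ 0 := Ring.two_ne_zero hchar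
  have h := congrArg Subtype.val hx
  have h01 := congrFun (congrFun h 0) 1
  have h00 := congrFun (congrFun h 0) 0
  simp [starUT] at h01 h00
  constructor
  · have h2' : (2:F) * x.1 0 1 = 0 := by linear_combination h01
    rcases mul_eq_zero.mp h2' with h | h
    · exact absurd h h2
    · exact h
  · linear_combination h00

lemma prod_skew_form (F : Type*) [Field F] (hchar : ringChar F ≠ 2) :
    ∀ L : List ↥(UT2 F), (∀ x ∈ L, starUT F x = -x) →
      (L.prod).1 0 1 = 0 ∧
      (L.prod).1 1 1 = (-1 : F) ^ L.length * (L.prod).1 0 0 := by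
  intro L
  induction L with
  | nil => intro _; simp [Matrix.one_apply]
  | cons x L ih =>
    intro h
    obtain ⟨hx01, hx11⟩ := skew_entries F hchar x (h x List.mem_cons_self)
    obtain ⟨hp01, hp11⟩ := ih (fun y hy => h y (List.mem_cons_of_mem x hy))
    have hp10 : (L.prod).1 1 0 = 0 := (L.prod).2
    have hx10 : x.1 1 0 = 0 := x.2
    have hmul : ((x :: L).prod).1 = x.1 * (L.prod).1 := rfl
    constructor
    · rw [hmul]
      rw [Matrix.mul_apply, Fin.sum_univ_two, hx01, hp01]
      ring
    · rw [hmul]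
      rw [Matrix.mul_apply, Fin.sum_univ_two, Matrix.mul_apply, Fin.sum_univ_two,
        hx01, hx10, hx11, hp11, hp10, List.length_cons]
      ring

theorem stmt_3 (F : Type*) [Field F] (hchar : ringChar F ≠ 2) (n : ℕ)
    (Z : Fin (2 * n) → ↥(UT2 F)) (hZ : ∀ i, starUT F (Z i) = -(Z i)) :
    (List.ofFn Z).prod ∈ Subalgebra.center F ↥(UT2 F) := by
  obtain ⟨h01, hd⟩ := prod_skew_form F hchar (List.ofFn Z)
    (fun x hx => by
      obtain ⟨i, rfl⟩ := List.mem_ofFn.mp hx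
      exact hZ i)
  apply central_of_scalar F _ h01
  rw [hd, List.length_ofFn]
  have : (-1 : F) ^ (2 * n) = 1 := by
    rw [pow_mul]; norm_num
  rw [this, one_mul]
end

section
/- Let F be a field with char(F) ≠ 2, and let f ∈ F⟨Y∪Z⟩ be homogeneous in the variable z_m of degree d ≥ 0 (every monomial of f contains exactly d occurrences of z_m). If the polynomial g = f·z_m belongs to C(UT_2(F), ⋆), then g ∈ Id(UT_2(F), ⋆) + ⟨z_1z_2⟩^{TS(*)}. -/
open scoped BigOperators

set_option maxHeartbeats 1000000
set_option synthInstance.maxHeartbeats 400000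

section Aux

variable (F : Type*) [Field F]

lemma UT2_lower {M : ↥(UT2 F)} : M.1 1 0 = 0 := M.2

lemma UT2_mul_apply (M N : ↥(UT2 F)) (i j : Fin 2) :
    (M * N).1 i j = M.1 i 0 * N.1 0 j + M.1 i 1 * N.1 1 j := by
  show (M.1 * N.1) i j = _
  rw [Matrix.mul_apply, Fin.sum_univ_two]

lemma starUT_apply (M : ↥(UT2 F)) :
    (starUT F M).1 = !![M.1 1 1, M.1 0 1; 0, M.1 0 0] := rfl

lemma starUT_add (M N : ↥(UT2 F)) :
    starUT F (M + N) = starUT F M + starUT F N := by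
  apply Subtype.ext
  show _ = (starUT F M).1 + (starUT F N).1
  rw [starUT_apply, starUT_apply, starUT_apply]
  show (!![(M.1 + N.1) 1 1, (M.1 + N.1) 0 1; 0, (M.1 + N.1) 0 0] : Matrix (Fin 2) (Fin 2) F) = _
  ext i j
  fin_cases i <;> fin_cases j <;> simp

lemma starUT_neg (M : ↥(UT2 F)) : starUT F (-M) = -(starUT F M) := by
  apply Subtype.ext
  show _ = -(starUT F M).1
  rw [starUT_apply, starUT_apply]
  show (!![(-M.1) 1 1, (-M.1) 0 1; 0, (-M.1) 0 0] : Matrix (Fin 2) (Fin 2) F) = _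
  ext i j
  fin_cases i <;> fin_cases j <;> simp

lemma starUT_mul (M N : ↥(UT2 F)) :
    starUT F (M * N) = starUT F N * starUT F M := by
  apply Subtype.ext
  show (starUT F (M * N)).1 = (starUT F N).1 * (starUT F M).1
  rw [starUT_apply, starUT_apply, starUT_apply]
  ext i j
  fin_cases i <;> fin_cases j <;>
    simp [Matrix.mul_apply, Fin.sum_univ_two, UT2_mul_apply, UT2_lower, M.2, N.2] <;> ring

lemma starUT_algebraMap (r : F) :
    starUT F (algebraMap F ↥(UT2 F) r) = algebraMap F ↥(UT2 F) r := by
  apply Subtype.ext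
  rw [starUT_apply]
  have h : ((algebraMap F ↥(UT2 F) r : ↥(UT2 F)) : Matrix (Fin 2) (Fin 2) F)
      = algebraMap F (Matrix (Fin 2) (Fin 2) F) r := rfl
  rw [h]
  ext i j
  fin_cases i <;> fin_cases j <;> simp [Matrix.algebraMap_matrix_apply]

lemma fStar_add (a b : FA F) : fStar F (a + b) = fStar F a + fStar F b := by
  simp [fStar, map_add]

lemma fStar_sub (a b : FA F) : fStar F (a - b) = fStar F a - fStar F b := by
  simp [fStar, map_sub]

lemma fStar_smul (c : F) (a : FA F) : fStar F (c • a) = c • fStar F a := by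
  simp [fStar, map_smul]

lemma fStar_mul (a b : FA F) : fStar F (a * b) = fStar F b * fStar F a := by
  simp [fStar, map_mul]

lemma fStar_algebraMap (r : F) :
    fStar F (algebraMap F (FA F) r) = algebraMap F (FA F) r := by
  simp [fStar, AlgHom.commutes, MulOpposite.algebraMap_apply]

lemma fStar_yv (i : ℕ) : fStar F (yv F i) = yv F i := by
  simp [fStar, yv, fStarAux, FreeAlgebra.lift_ι_apply]

lemma fStar_zv (i : ℕ) : fStar F (zv F i) = -(zv F i) := by
  simp [fStar, zv, fStarAux, FreeAlgebra.lift_ι_apply]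

lemma fStar_fStar (a : FA F) : fStar F (fStar F a) = a := by
  induction a using FreeAlgebra.induction with
  | grade0 r => rw [fStar_algebraMap, fStar_algebraMap]
  | grade1 x =>
    cases x with
    | inl i => rw [show FreeAlgebra.ι F (Sum.inl i) = yv F i from rfl, fStar_yv, fStar_yv]
    | inr i =>
      rw [show FreeAlgebra.ι F (Sum.inr i) = zv F i from rfl, fStar_zv]
      have : fStar F (-(zv F i)) = -(fStar F (zv F i)) := by
        have := fStar_sub F 0 (zv F i)
        simpa [fStar, map_zero] using this
      rw [this, fStar_zv, neg_neg]
  | mul a b ha hb => rw [fStar_mul, fStar_mul, ha, hb]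
  | add a b ha hb => rw [fStar_add, fStar_add, ha, hb]

/-- Compatibility: a substitution intertwines `fStar` and `starUT`. -/
lemma subst_star {φ : FA F →ₐ[F] ↥(UT2 F)} (hφ : IsSubstWith F (starUT F) φ)
    (a : FA F) : φ (fStar F a) = starUT F (φ a) := by
  induction a using FreeAlgebra.induction with
  | grade0 r => rw [fStar_algebraMap, AlgHom.commutes, starUT_algebraMap]
  | grade1 x =>
    cases x with
    | inl i =>
      rw [show FreeAlgebra.ι F (Sum.inl i) = yv F i from rfl, fStar_yv, hφ.1 i]
    | inr i =>
      rw [show FreeAlgebra.ι F (Sum.inr i) = zv F i from rfl, fStar_zv, map_neg, hφ.2 i]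
  | mul a b ha hb => rw [fStar_mul, map_mul, map_mul, ha, hb, starUT_mul]
  | add a b ha hb => rw [fStar_add, map_add, map_add, ha, hb, starUT_add]

variable {F}

lemma two_ne_zero_of_char (hchar : ringChar F ≠ 2) : (2 : F) ≠ 0 :=
  Ring.two_ne_zero hchar

/-- A central element of `UT2 F` has equal diagonal and zero corner. -/
lemma central_entries (hchar : ringChar F ≠ 2) {M : ↥(UT2 F)}
    (hM : M ∈ Subalgebra.center F ↥(UT2 F)) :
    M.1 0 1 = 0 ∧ M.1 0 0 = M.1 1 1 := by
  rw [Subalgebra.mem_center_iff] at hM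
  have hE : (!![0, 1; 0, 0] : Matrix (Fin 2) (Fin 2) F) ∈ UT2 F := by
    rw [mem_UT2]; simp
  have hJ : (!![1, 0; 0, -1] : Matrix (Fin 2) (Fin 2) F) ∈ UT2 F := by
    rw [mem_UT2]; simp
  have h1 := congrArg (fun N : ↥(UT2 F) => N.1 0 1) (hM ⟨_, hE⟩)
  have h2 := congrArg (fun N : ↥(UT2 F) => N.1 0 1) (hM ⟨_, hJ⟩)
  simp only [UT2_mul_apply] at h1 h2
  simp at h1 h2
  constructor
  · have h2c : (2 : F) * M.1 0 1 = 0 := by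
      first | linear_combination h2 | linear_combination -h2
    exact (mul_eq_zero.mp h2c).resolve_left (two_ne_zero_of_char hchar)
  · first | exact h1.symm | exact h1 | linear_combination h1 | linear_combination -h1

/-- Conversely, equal-diagonal zero-corner elements are central. -/
lemma central_of_entries {M : ↥(UT2 F)} (h1 : M.1 0 1 = 0) (h2 : M.1 0 0 = M.1 1 1) :
    M ∈ Subalgebra.center F ↥(UT2 F) := by
  have hM : M = algebraMap F ↥(UT2 F) (M.1 0 0) := by
    apply Subtype.ext
    have h : ((algebraMap F ↥(UT2 F) (M.1 0 0) : ↥(UT2 F)) : Matrix (Fin 2) (Fin 2) F)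
        = algebraMap F (Matrix (Fin 2) (Fin 2) F) (M.1 0 0) := rfl
    rw [h]
    ext i j
    fin_cases i <;> fin_cases j <;>
      simp [Matrix.algebraMap_matrix_apply, h1, h2.symm, show M.1 1 0 = 0 from M.2]
  rw [Subalgebra.mem_center_iff]
  intro N
  rw [hM]
  exact (Algebra.commutes _ _).symm

lemma skew_entries_s5 (hchar : ringChar F ≠ 2) {K : ↥(UT2 F)}
    (hK : starUT F K = -K) : K.1 0 1 = 0 ∧ K.1 1 1 = -(K.1 0 0) := by
  have h := congrArg Subtype.val hK
  rw [starUT_apply] at h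
  have hc : ((-K : ↥(UT2 F)) : Matrix (Fin 2) (Fin 2) F) = -(K.1) := rfl
  rw [hc] at h
  have h01 := congrFun (congrFun h 0) 1
  have h00 := congrFun (congrFun h 0) 0
  simp at h01 h00
  refine ⟨?_, by first | exact h00 | linear_combination h00 | linear_combination -h00⟩
  have h2c : (2 : F) * K.1 0 1 = 0 := by
    first | linear_combination h01 | linear_combination -h01
  exact (mul_eq_zero.mp h2c).resolve_left (two_ne_zero_of_char hchar)

lemma sym_entries {S : ↥(UT2 F)} (hS : starUT F S = S) : S.1 1 1 = S.1 0 0 := by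
  have h := congrArg Subtype.val hS
  rw [starUT_apply] at h
  exact congrFun (congrFun h 0) 0

/-- Product of two skew elements is central. -/
lemma skew_mul_skew_central (hchar : ringChar F ≠ 2) {K K' : ↥(UT2 F)}
    (hK : starUT F K = -K) (hK' : starUT F K' = -K') :
    K * K' ∈ Subalgebra.center F ↥(UT2 F) := by
  obtain ⟨h1, h2⟩ := skew_entries_s5 hchar hK
  obtain ⟨h1', h2'⟩ := skew_entries_s5 hchar hK'
  apply central_of_entries
  · rw [UT2_mul_apply, h1', h1]; ring
  · rw [UT2_mul_apply, UT2_mul_apply, h2, h2',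
      show K.1 1 0 = 0 from K.2, show K'.1 1 0 = 0 from K'.2]
    ring

/-- A central symmetric-times-skew product is zero. -/
lemma sym_mul_skew_central_eq_zero (hchar : ringChar F ≠ 2) {S K : ↥(UT2 F)}
    (hS : starUT F S = S) (hK : starUT F K = -K)
    (hc : S * K ∈ Subalgebra.center F ↥(UT2 F)) : S * K = 0 := by
  obtain ⟨hk1, hk2⟩ := skew_entries_s5 hchar hK
  have hs := sym_entries hS
  obtain ⟨hc1, hc2⟩ := central_entries hchar hc
  rw [UT2_mul_apply] at hc1 hc2
  rw [UT2_mul_apply] at hc2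
  have hK10 : K.1 1 0 = 0 := K.2
  have hS10 : S.1 1 0 = 0 := S.2
  have hd : S.1 0 0 * K.1 0 0 = 0 := by
    have h2c : (2 : F) * (S.1 0 0 * K.1 0 0) = 0 := by
      linear_combination hc2 - S.1 0 1 * hK10 + K.1 0 1 * hS10
        + K.1 1 1 * hs + S.1 0 0 * hk2
    exact (mul_eq_zero.mp h2c).resolve_left (two_ne_zero_of_char hchar)
  apply Subtype.ext
  have hz : ((0 : ↥(UT2 F)) : Matrix (Fin 2) (Fin 2) F) = 0 := rfl
  rw [hz]
  ext i j
  fin_cases i <;> fin_cases j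
  · simp [UT2_mul_apply, hK10, hd]
  · simpa [UT2_mul_apply] using hc1
  · simp [UT2_mul_apply, hS10, hK10]
  · simp [UT2_mul_apply, hS10, hs, hk2, hd]

end Aux

theorem stmt_5 (F : Type*) [Field F] (hchar : ringChar F ≠ 2)
    (m d : ℕ) (f : FA F)
    (hhom : ∀ w ∈ (FreeAlgebra.equivMonoidAlgebraFreeMonoid (R := F) (X := ℕ ⊕ ℕ) f).coeff.support,
      (FreeMonoid.toList w).count (Sum.inr m) = d)
    (hc : f * zv F m ∈ CWith F (starUT F)) :
    f * zv F m ∈ IdWith F (starUT F) ⊔ TSz F := by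
  have h2ne : (2 : F) ≠ 0 := two_ne_zero_of_char hchar
  set s := fStar F f with hs
  set fs := (2⁻¹ : F) • (f + s) with hfs
  set fk := (2⁻¹ : F) • (f - s) with hfk
  have hsum : fs + fk = f := by
    rw [hfs, hfk, ← smul_add]
    have h : (f + s) + (f - s) = (2 : F) • f := by rw [two_smul]; abel
    rw [h, smul_smul, inv_mul_cancel₀ h2ne, one_smul]
  have h_fs : fStar F fs = fs := by
    rw [hfs, fStar_smul, fStar_add, hs, fStar_fStar, add_comm]
  have h_fk : fStar F fk = -fk := by
    rw [hfk, fStar_smul, fStar_sub, hs, fStar_fStar, ← neg_sub f (fStar F f), smul_neg]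
  have hfe : f * zv F m = fs * zv F m + fk * zv F m := by rw [← add_mul, hsum]
  have htk : fk * zv F m ∈ TSz F :=
    Submodule.subset_span ⟨fk, zv F m, h_fk, fStar_zv F m, rfl⟩
  have hid : fs * zv F m ∈ IdWith F (starUT F) := by
    intro φ hφ
    rw [map_mul]
    apply sym_mul_skew_central_eq_zero hchar
    · rw [← subst_star F hφ, h_fs]
    · exact hφ.2 m
    · have h1 := hc φ hφ
      have hkskew : starUT F (φ fk) = -(φ fk) := by
        rw [← subst_star F hφ, h_fk, map_neg]
      have h2 : φ (fk * zv F m) ∈ Subalgebra.center F ↥(UT2 F) := by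
        rw [map_mul]
        exact skew_mul_skew_central hchar hkskew (hφ.2 m)
      have h3 : φ fs * φ (zv F m) = φ (f * zv F m) - φ (fk * zv F m) := by
        rw [← map_mul, hfe, map_add, add_sub_cancel_right]
      rw [h3]
      exact sub_mem h1 h2
  rw [hfe]
  exact add_mem (Submodule.mem_sup_left hid) (Submodule.mem_sup_right htk)
end

section
/- Let F be an infinite field with char(F) ≠ 2. Then Id(UT_2(F), ⋆) equals the two-sided ideal of F⟨Y∪Z⟩ generated by all elements f(g_1, …, g_n, h_1, …, h_m) where f is one of the polynomials [y_1, y_2], [z_1, z_2], [y_1, z_1][y_2, z_2], z_1 y_1 z_2 − z_2 y_1 z_1, the g_i range over symmetric polynomials and the h_j range over skew polynomials of F⟨Y∪Z⟩. -/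
open scoped BigOperators

set_option maxHeartbeats 1000000
set_option synthInstance.maxHeartbeats 400000

namespace Aux
variable (F : Type*) [Field F]

@[simp] lemma fStar_add (a b : FA F) : fStar F (a+b) = fStar F a + fStar F b := by
  simp [fStar, map_add]
@[simp] lemma fStar_mul (a b : FA F) : fStar F (a*b) = fStar F b * fStar F a := by
  simp [fStar, map_mul]
@[simp] lemma fStar_neg (a : FA F) : fStar F (-a) = -fStar F a := by
  simp [fStar, map_neg]
@[simp] lemma fStar_sub (a b : FA F) : fStar F (a-b) = fStar F a - fStar F b := by
  simp [fStar, map_sub]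
@[simp] lemma fStar_smul (r : F) (a : FA F) : fStar F (r • a) = r • fStar F a := by
  simp [fStar, map_smul]
@[simp] lemma fStar_one : fStar F (1 : FA F) = 1 := by
  simp [fStar, map_one]
@[simp] lemma fStar_algebraMap (r : F) : fStar F (algebraMap F (FA F) r) = algebraMap F (FA F) r := by
  simp [fStar]
@[simp] lemma fStar_y (i : ℕ) : fStar F (yv F i) = yv F i := by
  simp [fStar, yv, fStarAux]
@[simp] lemma fStar_z (i : ℕ) : fStar F (zv F i) = -zv F i := by
  simp [fStar, zv, fStarAux]

lemma sym_yv (i : ℕ) : IsSym F (yv F i) := by simp [IsSym]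
lemma skew_zv (i : ℕ) : IsSkew F (zv F i) := by simp [IsSkew]
lemma sym_one : IsSym F (1 : FA F) := by simp [IsSym]

/-- the commutator `[y_i, z_j]`. -/
noncomputable def cc (i j : ℕ) : FA F := yv F i * zv F j - zv F j * yv F i

lemma sym_cc (i j : ℕ) : IsSym F (cc F i j) := by
  simp [IsSym, cc]; abel

lemma sym_zz (i j : ℕ) : IsSym F (zv F i * zv F j + zv F j * zv F i) := by
  simp [IsSym]; abel

end Aux
namespace Aux
variable (F : Type*) [Field F]

/-- The generating set of the T*-ideal. -/
def genSet : Set (FA F) := {a : FA F |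
        (∃ g₁ g₂, IsSym F g₁ ∧ IsSym F g₂ ∧ a = g₁ * g₂ - g₂ * g₁) ∨
        (∃ h₁ h₂, IsSkew F h₁ ∧ IsSkew F h₂ ∧ a = h₁ * h₂ - h₂ * h₁) ∨
        (∃ g₁ g₂ h₁ h₂, IsSym F g₁ ∧ IsSym F g₂ ∧ IsSkew F h₁ ∧ IsSkew F h₂ ∧
          a = (g₁ * h₁ - h₁ * g₁) * (g₂ * h₂ - h₂ * g₂)) ∨
        (∃ g₁ h₁ h₂, IsSym F g₁ ∧ IsSkew F h₁ ∧ IsSkew F h₂ ∧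
          a = h₁ * g₁ * h₂ - h₂ * g₁ * h₁)}

/-- the T*-ideal. -/
def JJ : TwoSidedIdeal (FA F) := TwoSidedIdeal.span (genSet F)

variable {F}

lemma J1 {g g' : FA F} (hg : IsSym F g) (hg' : IsSym F g') : g * g' - g' * g ∈ JJ F :=
  TwoSidedIdeal.subset_span (Or.inl ⟨g, g', hg, hg', rfl⟩)

lemma J2 {h h' : FA F} (hh : IsSkew F h) (hh' : IsSkew F h') : h * h' - h' * h ∈ JJ F :=
  TwoSidedIdeal.subset_span (Or.inr (Or.inl ⟨h, h', hh, hh', rfl⟩))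

lemma J4 {g g' h h' : FA F} (hg : IsSym F g) (hg' : IsSym F g') (hh : IsSkew F h)
    (hh' : IsSkew F h') : (g * h - h * g) * (g' * h' - h' * g') ∈ JJ F :=
  TwoSidedIdeal.subset_span (Or.inr (Or.inr (Or.inl ⟨g, g', h, h', hg, hg', hh, hh', rfl⟩)))

lemma J3 {g h h' : FA F} (hg : IsSym F g) (hh : IsSkew F h) (hh' : IsSkew F h') :
    h * g * h' - h' * g * h ∈ JJ F :=
  TwoSidedIdeal.subset_span (Or.inr (Or.inr (Or.inr ⟨g, h, h', hg, hh, hh', rfl⟩)))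

variable (F) in
/-- congruence modulo the T*-ideal. -/
def adj (f g : FA F) : Prop := f - g ∈ JJ F

lemma adj_refl (f : FA F) : adj F f f := by
  simpa [adj] using (JJ F).zero_mem

lemma adj_of_mem {f : FA F} (h : f ∈ JJ F) : adj F f 0 := by simpa [adj] using h

lemma mem_of_adj {f g : FA F} (h : adj F f g) (hg : g ∈ JJ F) : f ∈ JJ F := by
  have := (JJ F).add_mem h hg; simpa using this

lemma adj_symm {f g : FA F} (h : adj F f g) : adj F g f := by
  have := (JJ F).neg_mem h; simpa [adj, neg_sub] using this

lemma adj_trans {f g h : FA F} (h1 : adj F f g) (h2 : adj F g h) : adj F f h := by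
  have := (JJ F).add_mem h1 h2; simpa [adj, sub_add_sub_cancel] using this

lemma adj_add {f g f' g' : FA F} (h1 : adj F f g) (h2 : adj F f' g') : adj F (f + f') (g + g') := by
  have := (JJ F).add_mem h1 h2
  simpa [adj, sub_add_sub_comm] using this

lemma adj_mul_left (a : FA F) {f g : FA F} (h : adj F f g) : adj F (a * f) (a * g) := by
  have := (JJ F).mul_mem_left a _ h
  simpa [adj, mul_sub] using this

lemma adj_mul_right (a : FA F) {f g : FA F} (h : adj F f g) : adj F (f * a) (g * a) := by
  have := (JJ F).mul_mem_right _ a h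
  simpa [adj, sub_mul] using this

lemma adj_smul (r : F) {f g : FA F} (h : adj F f g) : adj F (r • f) (r • g) := by
  have : algebraMap F (FA F) r * (f - g) ∈ JJ F := (JJ F).mul_mem_left _ _ h
  simpa [adj, mul_sub, Algebra.smul_def, smul_sub] using this

lemma adj_neg {f g : FA F} (h : adj F f g) : adj F (-f) (-g) := by
  have := (JJ F).neg_mem h; simpa [adj, neg_sub, sub_neg_eq_add, neg_add_eq_sub] using this

lemma smul_mem_JJ (r : F) {f : FA F} (h : f ∈ JJ F) : r • f ∈ JJ F := by
  have := (JJ F).mul_mem_left (algebraMap F (FA F) r) _ h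
  simpa [Algebra.smul_def] using this

end Aux
namespace Aux
variable {F : Type*} [Field F]

lemma A1 (i k : ℕ) : adj F (yv F i * yv F k) (yv F k * yv F i) :=
  J1 (sym_yv F i) (sym_yv F k)

lemma A2 (i k : ℕ) : adj F (zv F i * zv F k) (zv F k * zv F i) :=
  J2 (skew_zv F i) (skew_zv F k)

lemma A3 (k i j : ℕ) : adj F (yv F k * cc F i j) (cc F i j * yv F k) :=
  J1 (sym_yv F k) (sym_cc F i j)

lemma J5 (h2 : (2:F) ≠ 0) (k i j : ℕ) :
    yv F k * (zv F i * zv F j) - (zv F i * zv F j) * yv F k ∈ JJ F := by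
  set y := yv F k
  set u := zv F i * zv F j + zv F j * zv F i with hu
  set v := zv F i * zv F j - zv F j * zv F i with hv
  have hmemu : y * u - u * y ∈ JJ F := J1 (sym_yv F k) (sym_zz F i j)
  have hvJ : v ∈ JJ F := J2 (skew_zv F i) (skew_zv F j)
  have hmemv : y * v - v * y ∈ JJ F := by
    have h1 := (JJ F).mul_mem_left y _ hvJ
    have h2 := (JJ F).mul_mem_right _ y hvJ
    simpa [sub_eq_add_neg] using (JJ F).add_mem h1 ((JJ F).neg_mem h2)
  have hsum : (y * u - u * y) + (y * v - v * y) ∈ JJ F := (JJ F).add_mem hmemu hmemv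
  have key : (2:F)⁻¹ • ((y * u - u * y) + (y * v - v * y)) ∈ JJ F := smul_mem_JJ _ hsum
  have heq : (2:F)⁻¹ • ((y * u - u * y) + (y * v - v * y)) =
      y * (zv F i * zv F j) - (zv F i * zv F j) * y := by
    rw [hu, hv]
    have : (y * (zv F i * zv F j + zv F j * zv F i) -
        (zv F i * zv F j + zv F j * zv F i) * y) +
        (y * (zv F i * zv F j - zv F j * zv F i) -
          (zv F i * zv F j - zv F j * zv F i) * y)
        = (2:F) • (y * (zv F i * zv F j) - (zv F i * zv F j) * y) := by
      rw [two_smul]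
      noncomm_ring
    rw [this, smul_smul, inv_mul_cancel₀ h2, one_smul]
  rw [← heq]
  simpa using key

lemma A4 (h2 : (2:F) ≠ 0) (k i j : ℕ) :
    zv F k * cc F i j + cc F i j * zv F k ∈ JJ F := by
  have t1 : zv F k * yv F i * zv F j - zv F j * yv F i * zv F k ∈ JJ F :=
    J3 (sym_yv F i) (skew_zv F k) (skew_zv F j)
  have t2 : yv F i * (zv F j * zv F k) - (zv F j * zv F k) * yv F i ∈ JJ F := J5 h2 i j k
  have t3 : (zv F j * zv F k - zv F k * zv F j) * yv F i ∈ JJ F :=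
    (JJ F).mul_mem_right _ _ (A2 j k)
  have heq : zv F k * cc F i j + cc F i j * zv F k =
      (zv F k * yv F i * zv F j - zv F j * yv F i * zv F k) +
      (yv F i * (zv F j * zv F k) - (zv F j * zv F k) * yv F i) +
      ((zv F j * zv F k - zv F k * zv F j) * yv F i) := by
    simp only [cc]; noncomm_ring
  rw [heq]
  exact (JJ F).add_mem ((JJ F).add_mem t1 t2) t3

lemma adj_zc (h2 : (2:F) ≠ 0) (k i j : ℕ) :
    adj F (zv F k * cc F i j) (-(cc F i j * zv F k)) := by
  have := A4 h2 k i j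
  simpa [adj, sub_neg_eq_add] using this

lemma A5 (i j k l : ℕ) : cc F i j * cc F k l ∈ JJ F := by
  have := J4 (sym_yv F i) (sym_yv F k) (skew_zv F j) (skew_zv F l)
  simpa [cc] using this

lemma A6 (i j l : ℕ) : adj F (zv F l * cc F i j) (zv F j * cc F i l) := by
  have t1 : zv F l * yv F i * zv F j - zv F j * yv F i * zv F l ∈ JJ F :=
    J3 (sym_yv F i) (skew_zv F l) (skew_zv F j)
  have t2 : (zv F l * zv F j - zv F j * zv F l) * yv F i ∈ JJ F :=
    (JJ F).mul_mem_right _ _ (A2 l j)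
  have heq : zv F l * cc F i j - zv F j * cc F i l =
      (zv F l * yv F i * zv F j - zv F j * yv F i * zv F l) -
      ((zv F l * zv F j - zv F j * zv F l) * yv F i) := by
    simp only [cc]; noncomm_ring
  show _ ∈ JJ F
  rw [heq]
  exact (JJ F).add_mem t1 ((JJ F).neg_mem t2)

variable (F) in
noncomputable def Yl (l : List ℕ) : FA F := (l.map (yv F)).prod
variable (F) in
noncomputable def Zl (l : List ℕ) : FA F := (l.map (zv F)).prod

@[simp] lemma Yl_nil : Yl F [] = 1 := rfl
@[simp] lemma Yl_cons (a : ℕ) (t : List ℕ) : Yl F (a :: t) = yv F a * Yl F t := by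
  simp [Yl]
@[simp] lemma Zl_nil : Zl F [] = 1 := rfl
@[simp] lemma Zl_cons (a : ℕ) (t : List ℕ) : Zl F (a :: t) = zv F a * Zl F t := by
  simp [Zl]
lemma Yl_append (l m : List ℕ) : Yl F (l ++ m) = Yl F l * Yl F m := by
  simp [Yl]
lemma Zl_append (l m : List ℕ) : Zl F (l ++ m) = Zl F l * Zl F m := by
  simp [Zl]

lemma L1 (i : ℕ) : ∀ l : List ℕ, adj F (yv F i * Yl F l) (Yl F (l.orderedInsert (·≤·) i))
  | [] => by simpa using adj_refl _
  | a :: t => by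
    by_cases h : i ≤ a
    · simp [List.orderedInsert, h]
      exact adj_refl _
    · simp only [List.orderedInsert, if_neg h, Yl_cons]
      have h1 : adj F (yv F i * (yv F a * Yl F t)) (yv F a * (yv F i * Yl F t)) := by
        have := adj_mul_right (Yl F t) (A1 i a)
        simpa [mul_assoc] using this
      exact adj_trans h1 (adj_mul_left _ (L1 i t))

lemma L2 (i : ℕ) : ∀ m : List ℕ, adj F (zv F i * Zl F m) (Zl F (m.orderedInsert (·≤·) i))
  | [] => by simpa using adj_refl _
  | a :: t => by
    by_cases h : i ≤ a
    · simp [List.orderedInsert, h]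
      exact adj_refl _
    · simp only [List.orderedInsert, if_neg h, Zl_cons]
      have h1 : adj F (zv F i * (zv F a * Zl F t)) (zv F a * (zv F i * Zl F t)) := by
        have := adj_mul_right (Zl F t) (A2 i a)
        simpa [mul_assoc] using this
      exact adj_trans h1 (adj_mul_left _ (L2 i t))

lemma LsortZ : ∀ m : List ℕ, adj F (Zl F m) (Zl F (m.insertionSort (·≤·)))
  | [] => adj_refl _
  | a :: t => by
    simp only [List.insertionSort, Zl_cons]
    exact adj_trans (adj_mul_left _ (LsortZ t)) (L2 a _)

lemma L4 (i j : ℕ) : ∀ t : List ℕ, adj F (cc F i j * Yl F t) (Yl F t * cc F i j)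
  | [] => by simpa using adj_refl _
  | a :: t => by
    simp only [Yl_cons]
    have h1 : adj F (cc F i j * (yv F a * Yl F t)) (yv F a * (cc F i j * Yl F t)) := by
      have := adj_mul_right (Yl F t) (adj_symm (A3 a i j))
      simpa [mul_assoc] using this
    have h2 : adj F (yv F a * (cc F i j * Yl F t)) (yv F a * (Yl F t * cc F i j)) :=
      adj_mul_left _ (L4 i j t)
    exact adj_trans h1 (adj_trans h2 (by rw [mul_assoc]; exact adj_refl _))

lemma L5 (h2 : (2:F) ≠ 0) (i j : ℕ) :
    ∀ m : List ℕ, adj F (cc F i j * Zl F m) (((-1:F)^m.length) • (Zl F m * cc F i j))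
  | [] => by simpa using adj_refl _
  | a :: t => by
    simp only [Zl_cons, List.length_cons]
    have h1 : adj F (cc F i j * (zv F a * Zl F t)) (-(zv F a * (cc F i j * Zl F t))) := by
      have hz : adj F (cc F i j * zv F a) (-(zv F a * cc F i j)) := by
        have := A4 h2 a i j
        simpa [adj, sub_neg_eq_add, add_comm] using this
      have := adj_mul_right (Zl F t) hz
      simpa [mul_assoc] using this
    have h3 : adj F (-(zv F a * (cc F i j * Zl F t)))
        (-(zv F a * (((-1:F)^t.length) • (Zl F t * cc F i j)))) :=
      adj_neg (adj_mul_left _ (L5 h2 i j t))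
    refine adj_trans h1 (adj_trans h3 ?_)
    have : -(zv F a * (((-1:F)^t.length) • (Zl F t * cc F i j)))
        = ((-1:F)^(t.length+1)) • (zv F a * Zl F t * cc F i j) := by
      rw [mul_smul_comm, pow_succ]
      rw [← neg_smul]
      congr 1
      · ring
      · rw [mul_assoc]
    rw [this]
    exact adj_refl _

end Aux
namespace Aux
variable (F : Type*) [Field F]

structure IA where
  l : List ℕ
  m : List ℕ
  hl : l.Pairwise (·≤·)
  hm : m.Pairwise (·≤·)

structure IB where
  l : List ℕ
  m : List ℕ
  a : ℕ
  b : ℕ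
  hl : l.Pairwise (·≤·)
  hm : m.Pairwise (·≤·)
  hb : ∀ x ∈ m, x ≤ b

noncomputable def fam : IA ⊕ IB → FA F :=
  Sum.elim (fun t => Yl F t.l * Zl F t.m) (fun t => Yl F t.l * Zl F t.m * cc F t.a t.b)

noncomputable def Jmod : Submodule F (FA F) where
  carrier := {x | x ∈ JJ F}
  add_mem' := (JJ F).add_mem
  zero_mem' := (JJ F).zero_mem
  smul_mem' := fun r _ h => smul_mem_JJ r h

noncomputable def MM : Submodule F (FA F) :=
  Submodule.span F (Set.range (fam F)) ⊔ Jmod F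

variable {F}

lemma mem_MM_of_J {f : FA F} (h : f ∈ JJ F) : f ∈ MM F :=
  Submodule.mem_sup_right h

lemma mem_MM_of_fam (t : IA ⊕ IB) : fam F t ∈ MM F :=
  Submodule.mem_sup_left (Submodule.subset_span ⟨t, rfl⟩)

lemma mem_MM_A {l m : List ℕ} (hl : l.Pairwise (·≤·)) (hm : m.Pairwise (·≤·)) :
    Yl F l * Zl F m ∈ MM F :=
  mem_MM_of_fam (Sum.inl ⟨l, m, hl, hm⟩)

lemma mem_MM_B {l m : List ℕ} {a b : ℕ} (hl : l.Pairwise (·≤·)) (hm : m.Pairwise (·≤·))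
    (hb : ∀ x ∈ m, x ≤ b) : Yl F l * Zl F m * cc F a b ∈ MM F :=
  mem_MM_of_fam (Sum.inr ⟨l, m, a, b, hl, hm, hb⟩)

lemma mem_MM_of_adj {f g : FA F} (h : adj F f g) (hg : g ∈ MM F) : f ∈ MM F := by
  rw [← sub_add_cancel f g]
  exact (MM F).add_mem (mem_MM_of_J h) hg

lemma sorted_le_getLast : ∀ {l : List ℕ}, l.Pairwise (·≤·) → ∀ x ∈ l, ∀ h : l ≠ [], x ≤ l.getLast h
  | [], _, x, hx, h => absurd rfl h
  | a :: t, hs, x, hx, h => by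
    rcases List.pairwise_cons.1 hs with ⟨ha, hts⟩
    rcases List.eq_nil_or_concat' t with rfl | ⟨t', q, rfl⟩
    · have hxa : x = a := by simpa using hx
      subst hxa
      simp
    · have hne : t' ++ [q] ≠ [] := by simp
      have hgl : (a :: (t' ++ [q])).getLast h = q := by
        rw [List.getLast_cons hne]
        simp [List.getLast_append]
      rw [hgl]
      rcases List.mem_cons.1 hx with rfl | hx'
      · exact ha q (by simp)
      · have := sorted_le_getLast hts x hx' hne
        simpa [List.getLast_append] using this

/-- Normalization: `Yl t * Zl m * c_{ij} ∈ M` for sorted `t, m` without the max condition. -/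
lemma normC (h2 : (2:F) ≠ 0) (t m : List ℕ) (ht : t.Pairwise (·≤·)) (hm : m.Pairwise (·≤·))
    (i j : ℕ) : Yl F t * Zl F m * cc F i j ∈ MM F := by
  by_cases hall : ∀ x ∈ m, x ≤ j
  · exact mem_MM_B ht hm hall
  · push_neg at hall
    obtain ⟨x, hxm, hjx⟩ := hall
    have hne : m ≠ [] := by rintro rfl; simp at hxm
    set q := m.getLast hne with hq
    have hxq : x ≤ q := sorted_le_getLast hm x hxm hne
    have hm' : m.dropLast ++ [q] = m := List.dropLast_append_getLast hne
    -- step 1: swap q and j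
    have step1 : adj F (Yl F t * Zl F m * cc F i j)
        (Yl F t * (Zl F m.dropLast * (zv F j * cc F i q))) := by
      have h6 : adj F (zv F q * cc F i j) (zv F j * cc F i q) := A6 i j q
      have := adj_mul_left (Yl F t * Zl F m.dropLast) h6
      have heq : Yl F t * Zl F m * cc F i j
          = Yl F t * Zl F m.dropLast * (zv F q * cc F i j) := by
        conv_lhs => rw [← hm']
        rw [Zl_append]
        simp [mul_assoc]
      rw [heq]
      simpa [mul_assoc] using this
    -- step 2: sort the new z-list
    set m₂ := (m.dropLast ++ [j]).insertionSort (·≤·) with hm₂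
    have step2 : adj F (Yl F t * (Zl F m.dropLast * (zv F j * cc F i q)))
        (Yl F t * (Zl F m₂ * cc F i q)) := by
      have hs : adj F (Zl F (m.dropLast ++ [j])) (Zl F m₂) := LsortZ _
      have := adj_mul_left (Yl F t) (adj_mul_right (cc F i q) hs)
      have heq : Yl F t * (Zl F m.dropLast * (zv F j * cc F i q))
          = Yl F t * (Zl F (m.dropLast ++ [j]) * cc F i q) := by
        rw [Zl_append]
        simp [mul_assoc]
      rw [heq]
      simpa [mul_assoc] using this
    refine mem_MM_of_adj (adj_trans step1 step2) ?_
    have hm₂s : m₂.Pairwise (·≤·) := List.pairwise_insertionSort _ _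
    have hm₂b : ∀ x ∈ m₂, x ≤ q := by
      intro y hy
      rw [hm₂] at hy
      rcases List.mem_append.1 ((List.mem_insertionSort _).1 hy) with hy' | hy'
      · exact sorted_le_getLast hm y (List.dropLast_subset _ hy') hne
      · simp at hy'
        subst hy'
        exact le_of_lt (lt_of_lt_of_le hjx hxq)
    have := mem_MM_B (F := F) (a := i) (b := q) ht hm₂s hm₂b
    simpa [mul_assoc] using this

lemma MM_mul_cc (h2 : (2:F) ≠ 0) (a b : ℕ) : ∀ f ∈ MM F, f * cc F a b ∈ MM F := by
  have hsub : MM F ≤ Submodule.comap ((LinearMap.mulRight F (cc F a b))) (MM F) := by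
    rw [MM]
    refine sup_le ?_ ?_
    · rw [Submodule.span_le]
      rintro _ ⟨t, rfl⟩
      rcases t with tA | tB
      · exact normC h2 tA.l tA.m tA.hl tA.hm a b
      · have : fam F (Sum.inr tB) * cc F a b
            = Yl F tB.l * Zl F tB.m * (cc F tB.a tB.b * cc F a b) := by
          simp [fam, mul_assoc]
        simp only [SetLike.mem_coe, Submodule.mem_comap, LinearMap.mulRight_apply]
        rw [this]
        exact mem_MM_of_J ((JJ F).mul_mem_left _ _ (A5 tB.a tB.b a b))
    · intro x hx
      exact mem_MM_of_J ((JJ F).mul_mem_right _ _ hx)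
  intro f hf
  exact hsub hf

lemma MM_mul_y (k : ℕ) : ∀ f ∈ MM F, yv F k * f ∈ MM F := by
  have hsub : MM F ≤ Submodule.comap ((LinearMap.mulLeft F (yv F k))) (MM F) := by
    rw [MM]
    refine sup_le ?_ ?_
    · rw [Submodule.span_le]
      rintro _ ⟨t, rfl⟩
      simp only [SetLike.mem_coe, Submodule.mem_comap, LinearMap.mulLeft_apply]
      rcases t with tA | tB
      · have hadj : adj F (yv F k * fam F (Sum.inl tA))
            (Yl F (tA.l.orderedInsert (·≤·) k) * Zl F tA.m) := by
          have := adj_mul_right (Zl F tA.m) (L1 k tA.l)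
          simpa [fam, mul_assoc] using this
        exact mem_MM_of_adj hadj
          (mem_MM_A (tA.hl.orderedInsert k tA.l) tA.hm)
      · have hadj : adj F (yv F k * fam F (Sum.inr tB))
            (Yl F (tB.l.orderedInsert (·≤·) k) * Zl F tB.m * cc F tB.a tB.b) := by
          have := adj_mul_right (Zl F tB.m * cc F tB.a tB.b) (L1 k tB.l)
          simpa [fam, mul_assoc] using this
        exact mem_MM_of_adj hadj
          (mem_MM_B (tB.hl.orderedInsert k tB.l) tB.hm tB.hb)
    · intro x hx
      exact mem_MM_of_J ((JJ F).mul_mem_left _ _ hx)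
  intro f hf
  exact hsub hf

lemma ccYZ (h2 : (2:F) ≠ 0) (i j : ℕ) (t m : List ℕ) (ht : t.Pairwise (·≤·))
    (hm : m.Pairwise (·≤·)) : cc F i j * (Yl F t * Zl F m) ∈ MM F := by
  have s1 : adj F (cc F i j * (Yl F t * Zl F m)) (Yl F t * (cc F i j * Zl F m)) := by
    have := adj_mul_right (Zl F m) (L4 i j t)
    simpa [mul_assoc] using this
  have s2 : adj F (Yl F t * (cc F i j * Zl F m))
      (Yl F t * (((-1:F)^m.length) • (Zl F m * cc F i j))) :=
    adj_mul_left _ (L5 h2 i j m)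
  refine mem_MM_of_adj (adj_trans s1 s2) ?_
  have : Yl F t * (((-1:F)^m.length) • (Zl F m * cc F i j))
      = ((-1:F)^m.length) • (Yl F t * Zl F m * cc F i j) := by
    rw [mul_smul_comm, mul_assoc]
  rw [this]
  exact (MM F).smul_mem _ (normC h2 t m ht hm i j)

lemma zmulA (h2 : (2:F) ≠ 0) (k : ℕ) :
    ∀ l : List ℕ, l.Pairwise (·≤·) → ∀ m : List ℕ, m.Pairwise (·≤·) →
      zv F k * (Yl F l * Zl F m) ∈ MM F
  | [], _, m, hm => by
    have hadj : adj F (zv F k * (Yl F [] * Zl F m)) (Zl F (m.orderedInsert (·≤·) k)) := by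
      simpa using L2 k m
    exact mem_MM_of_adj hadj (by
      have := mem_MM_A (F := F) (l := []) (m := m.orderedInsert (·≤·) k)
        (List.Pairwise.nil) (hm.orderedInsert k m)
      simpa using this)
  | j :: t, hl, m, hm => by
    rcases List.pairwise_cons.1 hl with ⟨hj, ht⟩
    have key : zv F k * (Yl F (j :: t) * Zl F m)
        = yv F j * (zv F k * (Yl F t * Zl F m)) - cc F j k * (Yl F t * Zl F m) := by
      simp only [Yl_cons, cc]
      noncomm_ring
    rw [key]
    refine (MM F).sub_mem ?_ ?_
    · exact MM_mul_y j _ (zmulA h2 k t ht m hm)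
    · exact ccYZ h2 j k t m ht hm

lemma MM_mul_z (h2 : (2:F) ≠ 0) (k : ℕ) : ∀ f ∈ MM F, zv F k * f ∈ MM F := by
  have hsub : MM F ≤ Submodule.comap ((LinearMap.mulLeft F (zv F k))) (MM F) := by
    rw [MM]
    refine sup_le ?_ ?_
    · rw [Submodule.span_le]
      rintro _ ⟨t, rfl⟩
      simp only [SetLike.mem_coe, Submodule.mem_comap, LinearMap.mulLeft_apply]
      rcases t with tA | tB
      · exact zmulA h2 k tA.l tA.hl tA.m tA.hm
      · have : zv F k * fam F (Sum.inr tB)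
            = (zv F k * (Yl F tB.l * Zl F tB.m)) * cc F tB.a tB.b := by
          simp [fam, mul_assoc]
        rw [this]
        exact MM_mul_cc h2 _ _ _ (zmulA h2 k tB.l tB.hl tB.m tB.hm)
    · intro x hx
      exact mem_MM_of_J ((JJ F).mul_mem_left _ _ hx)
  intro f hf
  exact hsub hf

lemma one_mem_MM : (1 : FA F) ∈ MM F := by
  have := mem_MM_A (F := F) (l := []) (m := []) List.Pairwise.nil List.Pairwise.nil
  simpa using this

/-- Spanning: every element of the free algebra lies in `span S + J`. -/
lemma all_mem_MM (h2 : (2:F) ≠ 0) (f : FA F) : f ∈ MM F := by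
  have main : ∀ f : FA F, ∀ g ∈ MM F, f * g ∈ MM F := by
    intro f
    induction f using FreeAlgebra.induction with
    | grade0 r => intro g hg; simpa [Algebra.smul_def] using (MM F).smul_mem r hg
    | grade1 x =>
      rcases x with i | i
      · exact fun g hg => MM_mul_y i g hg
      · exact fun g hg => MM_mul_z h2 i g hg
    | mul a b ha hb => intro g hg; rw [mul_assoc]; exact ha _ (hb _ hg)
    | add a b ha hb => intro g hg; rw [add_mul]; exact (MM F).add_mem (ha g hg) (hb g hg)
  simpa using main f 1 one_mem_MM
end Aux
namespace Aux
variable {F : Type*} [Field F]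

lemma ut10 (M : ↥(UT2 F)) : M.1 1 0 = 0 := M.2

lemma starUT_add (M N : ↥(UT2 F)) : starUT F (M + N) = starUT F M + starUT F N := by
  apply Subtype.ext
  show (!![_,_;_,_] : Matrix (Fin 2) (Fin 2) F) = _
  ext i j
  fin_cases i <;> fin_cases j <;>
    simp [starUT, Matrix.add_apply]

lemma starUT_smul (r : F) (M : ↥(UT2 F)) : starUT F (r • M) = r • starUT F M := by
  apply Subtype.ext
  ext i j
  fin_cases i <;> fin_cases j <;>
    simp [starUT, Matrix.smul_apply]

lemma starUT_one : starUT F (1 : ↥(UT2 F)) = 1 := by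
  apply Subtype.ext
  ext i j
  fin_cases i <;> fin_cases j <;>
    simp [starUT, Matrix.one_apply]

lemma starUT_mul (M N : ↥(UT2 F)) : starUT F (M * N) = starUT F N * starUT F M := by
  apply Subtype.ext
  have hM := ut10 M
  have hN := ut10 N
  show (!![_,_;_,_] : Matrix (Fin 2) (Fin 2) F) = _
  ext i j
  fin_cases i <;> fin_cases j <;>
    simp [starUT, Matrix.mul_apply, Fin.sum_univ_two, hM, hN] <;> ring

lemma starUT_neg (M : ↥(UT2 F)) : starUT F (-M) = -starUT F M := by
  apply Subtype.ext
  ext i j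
  fin_cases i <;> fin_cases j <;>
    simp [starUT, Matrix.neg_apply]

lemma starUT_algebraMap (r : F) :
    starUT F (algebraMap F ↥(UT2 F) r) = algebraMap F ↥(UT2 F) r := by
  have : algebraMap F ↥(UT2 F) r = r • 1 := by
    rw [Algebra.algebraMap_eq_smul_one]
  rw [this, starUT_smul, starUT_one]

lemma subst_star {φ : FA F →ₐ[F] ↥(UT2 F)} (hφ : IsSubstWith F (starUT F) φ) (f : FA F) :
    φ (fStar F f) = starUT F (φ f) := by
  induction f using FreeAlgebra.induction with
  | grade0 r => rw [fStar_algebraMap, AlgHom.commutes, starUT_algebraMap]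
  | grade1 x =>
    rcases x with i | i
    · show φ (fStar F (yv F i)) = starUT F (φ (yv F i))
      rw [fStar_y, hφ.1 i]
    · show φ (fStar F (zv F i)) = starUT F (φ (zv F i))
      rw [fStar_z, map_neg, hφ.2 i]
  | mul a b ha hb => rw [fStar_mul, map_mul, ha, hb, map_mul, starUT_mul]
  | add a b ha hb => rw [fStar_add, map_add, ha, hb, map_add, starUT_add]

lemma subst_sym {φ : FA F →ₐ[F] ↥(UT2 F)} (hφ : IsSubstWith F (starUT F) φ) {g : FA F}
    (hg : IsSym F g) : starUT F (φ g) = φ g := by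
  rw [← subst_star hφ, hg]

lemma subst_skew {φ : FA F →ₐ[F] ↥(UT2 F)} (hφ : IsSubstWith F (starUT F) φ) {h : FA F}
    (hh : IsSkew F h) : starUT F (φ h) = -φ h := by
  rw [← subst_star hφ, hh, map_neg]

lemma sym_struct {M : ↥(UT2 F)} (h : starUT F M = M) :
    M.1 = !![M.1 0 0, M.1 0 1; 0, M.1 0 0] := by
  have h' := congrArg Subtype.val h
  have h11 : M.1 1 1 = M.1 0 0 := by
    have := congrFun (congrFun h' 0) 0
    simpa [starUT] using this
  ext i j
  fin_cases i <;> fin_cases j <;> simp [h11, ut10 M]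

lemma skew_struct (h2 : (2:F) ≠ 0) {M : ↥(UT2 F)} (h : starUT F M = -M) :
    M.1 = !![M.1 0 0, 0; 0, -(M.1 0 0)] := by
  have h' := congrArg Subtype.val h
  have h11 : M.1 1 1 = -(M.1 0 0) := by
    have := congrFun (congrFun h' 0) 0
    simpa [starUT] using this
  have h01 : M.1 0 1 = 0 := by
    have := congrFun (congrFun h' 0) 1
    simp [starUT] at this
    have h2' : M.1 0 1 + M.1 0 1 = 0 := by
      rw [eq_neg_iff_add_eq_zero] at this
      exact this
    have := mul_eq_zero.1 (by rw [two_mul]; exact h2' : (2:F) * M.1 0 1 = 0)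
    tauto
  ext i j
  fin_cases i <;> fin_cases j <;> simp [h11, h01, ut10 M]

lemma comm_of_sym {A B : ↥(UT2 F)} (hA : starUT F A = A) (hB : starUT F B = B) :
    A * B = B * A := by
  apply Subtype.ext
  show A.1 * B.1 = B.1 * A.1
  rw [sym_struct hA, sym_struct hB]
  rw [Matrix.mul_fin_two, Matrix.mul_fin_two]
  ext i j
  fin_cases i <;> fin_cases j <;> simp <;> ring

lemma comm_of_skew (h2 : (2:F) ≠ 0) {A B : ↥(UT2 F)} (hA : starUT F A = -A)
    (hB : starUT F B = -B) : A * B = B * A := by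
  apply Subtype.ext
  show A.1 * B.1 = B.1 * A.1
  rw [skew_struct h2 hA, skew_struct h2 hB]
  rw [Matrix.mul_fin_two, Matrix.mul_fin_two]
  ext i j
  fin_cases i <;> fin_cases j <;> simp <;> ring

lemma comm_sym_skew (h2 : (2:F) ≠ 0) {A B : ↥(UT2 F)}
    (hA : starUT F A = A) (hB : starUT F B = -B) :
    (A * B - B * A).1 = !![0, -(2 * (A.1 0 1 * B.1 0 0)); 0, 0] := by
  show A.1 * B.1 - B.1 * A.1 = _
  rw [sym_struct hA, skew_struct h2 hB]
  rw [Matrix.mul_fin_two, Matrix.mul_fin_two]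
  ext i j
  fin_cases i <;> fin_cases j <;> simp [Matrix.sub_apply] <;> ring

lemma zgz_comm (h2 : (2:F) ≠ 0) {A B C : ↥(UT2 F)} (hA : starUT F A = -A)
    (hB : starUT F B = B) (hC : starUT F C = -C) : A * B * C = C * B * A := by
  apply Subtype.ext
  show A.1 * B.1 * C.1 = C.1 * B.1 * A.1
  rw [skew_struct h2 hA, sym_struct hB, skew_struct h2 hC]
  rw [Matrix.mul_fin_two, Matrix.mul_fin_two, Matrix.mul_fin_two, Matrix.mul_fin_two]
  ext i j
  fin_cases i <;> fin_cases j <;> simp <;> ring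

/-- The easy direction: the T*-ideal consists of identities. -/
lemma JJ_le_Id (h2 : (2:F) ≠ 0) {f : FA F} (hf : f ∈ JJ F) :
    ∀ φ : FA F →ₐ[F] ↥(UT2 F), IsSubstWith F (starUT F) φ → φ f = 0 := by
  intro φ hφ
  let I : TwoSidedIdeal (FA F) := TwoSidedIdeal.mk' {f : FA F | φ f = 0}
    (map_zero φ) (fun ha hb => by simp_all [Set.mem_setOf_eq])
    (fun ha => by simp_all [Set.mem_setOf_eq])
    (fun {x y} hy => by simp_all [Set.mem_setOf_eq])
    (fun {x y} hx => by simp_all [Set.mem_setOf_eq])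
  have hgen : genSet F ⊆ {f : FA F | φ f = 0} := by
    rintro a (⟨g₁, g₂, hg₁, hg₂, rfl⟩ | ⟨h₁, h₂, hh₁, hh₂, rfl⟩ |
      ⟨g₁, g₂, h₁, h₂, hg₁, hg₂, hh₁, hh₂, rfl⟩ | ⟨g₁, h₁, h₂, hg₁, hh₁, hh₂, rfl⟩)
    · show φ _ = 0
      rw [map_sub, map_mul, map_mul, comm_of_sym (subst_sym hφ hg₁) (subst_sym hφ hg₂),
        sub_self]
    · show φ _ = 0
      rw [map_sub, map_mul, map_mul, comm_of_skew h2 (subst_skew hφ hh₁) (subst_skew hφ hh₂),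
        sub_self]
    · show φ _ = 0
      rw [map_mul]
      apply Subtype.ext
      show (φ _).1 * (φ _).1 = (0 : ↥(UT2 F)).1
      rw [map_sub, map_mul, map_mul, map_sub, map_mul, map_mul]
      rw [comm_sym_skew h2 (subst_sym hφ hg₁) (subst_skew hφ hh₁),
        comm_sym_skew h2 (subst_sym hφ hg₂) (subst_skew hφ hh₂), Matrix.mul_fin_two]
      ext i j
      fin_cases i <;> fin_cases j <;> simp
    · show φ _ = 0
      rw [map_sub, map_mul, map_mul, map_mul, map_mul,
        zgz_comm h2 (subst_skew hφ hh₁) (subst_sym hφ hg₁) (subst_skew hφ hh₂), sub_self]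
  have hJI : JJ F ≤ I := by
    rw [JJ]
    intro x hx
    exact TwoSidedIdeal.mem_span_iff.1 hx I (by
      intro a ha
      have := hgen ha
      rw [SetLike.mem_coe, TwoSidedIdeal.mem_mk']
      · exact this
      all_goals intros; first
        | exact (map_zero φ)
        | simp_all)
  have := hJI hf
  rw [TwoSidedIdeal.mem_mk'] at this
  · exact this
  all_goals intro _ _ <;> skip
end Aux
namespace Aux
open MvPolynomial
variable (F : Type*) [Field F]

abbrev RP := MvPolynomial (ℕ ⊕ ℕ ⊕ ℕ) F

def av (i : ℕ) : ℕ ⊕ ℕ ⊕ ℕ := Sum.inl i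
def bv (i : ℕ) : ℕ ⊕ ℕ ⊕ ℕ := Sum.inr (Sum.inl i)
def cv (i : ℕ) : ℕ ⊕ ℕ ⊕ ℕ := Sum.inr (Sum.inr i)

noncomputable def Ymat (i : ℕ) : Matrix (Fin 2) (Fin 2) (RP F) :=
  !![X (av i), X (cv i); 0, X (av i)]
noncomputable def Zmat (i : ℕ) : Matrix (Fin 2) (Fin 2) (RP F) :=
  !![X (bv i), 0; 0, -X (bv i)]

noncomputable def ψ : FA F →ₐ[F] Matrix (Fin 2) (Fin 2) (RP F) :=
  FreeAlgebra.lift F (Sum.elim (Ymat F) (Zmat F))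

@[simp] lemma psi_y (i : ℕ) : ψ F (yv F i) = Ymat F i := by
  simp [ψ, yv]
@[simp] lemma psi_z (i : ℕ) : ψ F (zv F i) = Zmat F i := by
  simp [ψ, zv]

/-- the substitution attached to a point. -/
noncomputable def φv (v : (ℕ ⊕ ℕ ⊕ ℕ) → F) : FA F →ₐ[F] ↥(UT2 F) :=
  FreeAlgebra.lift F (Sum.elim
    (fun i => (⟨!![v (av i), v (cv i); 0, v (av i)], by rw [mem_UT2]; simp⟩ : ↥(UT2 F)))
    (fun i => (⟨!![v (bv i), 0; 0, -v (bv i)], by rw [mem_UT2]; simp⟩ : ↥(UT2 F))))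

lemma φv_subst (v : (ℕ ⊕ ℕ ⊕ ℕ) → F) : IsSubstWith F (starUT F) (φv F v) := by
  constructor
  · intro i
    have hy : φv F v (yv F i) =
        ⟨!![v (av i), v (cv i); 0, v (av i)], by rw [mem_UT2]; simp⟩ := by
      simp [φv, yv]
    rw [hy]
    apply Subtype.ext
    show (!![_,_;_,_] : Matrix (Fin 2) (Fin 2) F) = _
    ext i j
    fin_cases i <;> fin_cases j <;> simp [starUT]
  · intro i
    have hz : φv F v (zv F i) =
        ⟨!![v (bv i), 0; 0, -v (bv i)], by rw [mem_UT2]; simp⟩ := by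
      simp [φv, zv]
    rw [hz]
    apply Subtype.ext
    show (!![_,_;_,_] : Matrix (Fin 2) (Fin 2) F) = _
    ext i j
    fin_cases i <;> fin_cases j <;> simp [starUT]

lemma psi_eval (v : (ℕ ⊕ ℕ ⊕ ℕ) → F) (f : FA F) :
    (ψ F f).map (aeval v) = ((UT2 F).val (φv F v f) : Matrix (Fin 2) (Fin 2) F) := by
  have : ((aeval v : RP F →ₐ[F] F).mapMatrix.comp (ψ F) : FA F →ₐ[F] Matrix (Fin 2) (Fin 2) F)
      = (UT2 F).val.comp (φv F v) := by
    apply FreeAlgebra.hom_ext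
    funext x
    rcases x with i | i <;>
    · simp only [Function.comp_apply, AlgHom.coe_comp, ψ, φv, FreeAlgebra.lift_ι_apply,
        AlgHom.mapMatrix_apply, Sum.elim_inl, Sum.elim_inr]
      ext a b
      fin_cases a <;> fin_cases b <;> simp [Ymat, Zmat, Subalgebra.coe_val]
  have h := congrArg (fun (g : FA F →ₐ[F] Matrix (Fin 2) (Fin 2) F) => g f) this
  simpa using h

lemma psi_zero_of_id {f : FA F}
    (hf : ∀ φ : FA F →ₐ[F] ↥(UT2 F), IsSubstWith F (starUT F) φ → φ f = 0)
    [Infinite F] : ψ F f = 0 := by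
  refine Matrix.ext fun i j => ?_
  rw [Matrix.zero_apply]
  apply MvPolynomial.funext (p := (ψ F f) i j) (q := 0)
  intro v
  have h1 : (ψ F f).map (aeval v) = 0 := by
    rw [psi_eval, hf (φv F v) (φv_subst F v)]
    simp
  have h2 : aeval v ((ψ F f) i j) = 0 := by
    have := congrFun (congrFun h1 i) j
    simpa [Matrix.map_apply] using this
  rw [map_zero]
  rw [aeval_def, Algebra.algebraMap_self] at h2
  exact h2

end Aux
namespace Aux
open MvPolynomial
variable (F : Type*) [Field F]

noncomputable def expof (s : Multiset (ℕ ⊕ ℕ ⊕ ℕ)) : (ℕ ⊕ ℕ ⊕ ℕ) →₀ ℕ :=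
  Multiset.toFinsupp s

lemma expof_add (s t : Multiset (ℕ ⊕ ℕ ⊕ ℕ)) : expof (s + t) = expof s + expof t :=
  map_add _ s t

noncomputable def expA (l : List ℕ) : (ℕ ⊕ ℕ ⊕ ℕ) →₀ ℕ := expof ↑(l.map av)
noncomputable def expB (m : List ℕ) : (ℕ ⊕ ℕ ⊕ ℕ) →₀ ℕ := expof ↑(m.map bv)

lemma expA_nil : expA [] = 0 := by simp [expA, expof]
lemma expB_nil : expB [] = 0 := by simp [expB, expof]

lemma expA_cons (a : ℕ) (t : List ℕ) :
    expA (a :: t) = Finsupp.single (av a) 1 + expA t := by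
  rw [expA, List.map_cons, ← Multiset.cons_coe, ← Multiset.singleton_add, expof_add]
  rw [expA]
  congr 1
  exact Multiset.toFinsupp_singleton _

lemma expB_cons (a : ℕ) (t : List ℕ) :
    expB (a :: t) = Finsupp.single (bv a) 1 + expB t := by
  rw [expB, List.map_cons, ← Multiset.cons_coe, ← Multiset.singleton_add, expof_add]
  rw [expB]
  congr 1
  exact Multiset.toFinsupp_singleton _

noncomputable def dA (t : IA) : (ℕ ⊕ ℕ ⊕ ℕ) →₀ ℕ := expA t.l + expB t.m
noncomputable def dB (t : IB) : (ℕ ⊕ ℕ ⊕ ℕ) →₀ ℕ :=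
  (expA t.l + expB t.m) + (Finsupp.single (cv t.a) 1 + Finsupp.single (bv t.b) 1)

-- extraction helpers
def pA : (ℕ ⊕ ℕ ⊕ ℕ) → Option ℕ := Sum.elim some (fun _ => none)
def pB : (ℕ ⊕ ℕ ⊕ ℕ) → Option ℕ := Sum.elim (fun _ => none) (Sum.elim some (fun _ => none))
def pC : (ℕ ⊕ ℕ ⊕ ℕ) → Option ℕ := Sum.elim (fun _ => none) (Sum.elim (fun _ => none) some)

lemma lfm_eq (p : (ℕ ⊕ ℕ ⊕ ℕ) → Option ℕ) (g : ℕ → ℕ ⊕ ℕ ⊕ ℕ) (hg : ∀ i, p (g i) = some i) :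
    ∀ l : List ℕ, List.filterMap p (l.map g) = l
  | [] => rfl
  | a :: t => by simp [List.filterMap_cons, hg a, lfm_eq p g hg t]

lemma lfm_nil (p : (ℕ ⊕ ℕ ⊕ ℕ) → Option ℕ) (g : ℕ → ℕ ⊕ ℕ ⊕ ℕ) (hg : ∀ i, p (g i) = none) :
    ∀ l : List ℕ, List.filterMap p (l.map g) = []
  | [] => rfl
  | a :: t => by simp [List.filterMap_cons, hg a, lfm_nil p g hg t]

lemma filterMap_coe_list (p : (ℕ ⊕ ℕ ⊕ ℕ) → Option ℕ) (l : List (ℕ ⊕ ℕ ⊕ ℕ)) :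
    Multiset.filterMap p (↑l : Multiset (ℕ ⊕ ℕ ⊕ ℕ)) = ↑(List.filterMap p l) :=
  Multiset.filterMap_coe p l

lemma dA_inj : Function.Injective dA := by
  rintro ⟨l₁, m₁, hl₁, hm₁⟩ ⟨l₂, m₂, hl₂, hm₂⟩ h
  set T₁ : List (ℕ ⊕ ℕ ⊕ ℕ) := l₁.map av ++ m₁.map bv with hT₁
  set T₂ : List (ℕ ⊕ ℕ ⊕ ℕ) := l₂.map av ++ m₂.map bv with hT₂
  have hms : (↑T₁ : Multiset (ℕ ⊕ ℕ ⊕ ℕ)) = ↑T₂ := by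
    apply Multiset.toFinsupp.injective
    have expand : ∀ (l m : List ℕ),
        Multiset.toFinsupp (↑(l.map av ++ m.map bv) : Multiset (ℕ ⊕ ℕ ⊕ ℕ))
        = expA l + expB m := by
      intro l m
      rw [← Multiset.coe_add, map_add]
      rfl
    rw [hT₁, hT₂, expand, expand]
    exact h
  have key : ∀ p : (ℕ ⊕ ℕ ⊕ ℕ) → Option ℕ,
      (↑(List.filterMap p T₁) : Multiset ℕ) = ↑(List.filterMap p T₂) := by
    intro p
    rw [← filterMap_coe_list, ← filterMap_coe_list, hms]
  have hl : l₁ = l₂ := by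
    have := key pA
    rw [hT₁, hT₂] at this
    simp only [List.filterMap_append,
      lfm_eq pA av (fun i => rfl), lfm_nil pA bv (fun i => rfl),
      List.append_nil, Multiset.coe_eq_coe] at this
    exact List.Perm.eq_of_pairwise' hl₁ hl₂ this
  have hm : m₁ = m₂ := by
    have := key pB
    rw [hT₁, hT₂] at this
    simp only [List.filterMap_append,
      lfm_eq pB bv (fun i => rfl), lfm_nil pB av (fun i => rfl),
      List.nil_append, Multiset.coe_eq_coe] at this
    exact List.Perm.eq_of_pairwise' hm₁ hm₂ this
  subst hl; subst hm; rfl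

lemma dB_inj : Function.Injective dB := by
  rintro ⟨l₁, m₁, a₁, b₁, hl₁, hm₁, hb₁⟩ ⟨l₂, m₂, a₂, b₂, hl₂, hm₂, hb₂⟩ h
  set T₁ : List (ℕ ⊕ ℕ ⊕ ℕ) := l₁.map av ++ m₁.map bv ++ ([a₁].map cv ++ [b₁].map bv) with hT₁
  set T₂ : List (ℕ ⊕ ℕ ⊕ ℕ) := l₂.map av ++ m₂.map bv ++ ([a₂].map cv ++ [b₂].map bv) with hT₂
  have hms : (↑T₁ : Multiset (ℕ ⊕ ℕ ⊕ ℕ)) = ↑T₂ := by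
    apply Multiset.toFinsupp.injective
    have expand : ∀ (l m : List ℕ) (a b : ℕ),
        Multiset.toFinsupp (↑(l.map av ++ m.map bv ++ ([a].map cv ++ [b].map bv)) :
          Multiset (ℕ ⊕ ℕ ⊕ ℕ))
        = (expA l + expB m) + (Finsupp.single (cv a) 1 + Finsupp.single (bv b) 1) := by
      intro l m a b
      rw [← Multiset.coe_add, ← Multiset.coe_add, ← Multiset.coe_add]
      rw [map_add, map_add, map_add]
      simp only [expA, expB, expof]
      congr 1
      congr 1 <;>
      · simp [Multiset.toFinsupp_singleton]
    rw [hT₁, hT₂, expand, expand]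
    exact h
  have key : ∀ p : (ℕ ⊕ ℕ ⊕ ℕ) → Option ℕ,
      (↑(List.filterMap p T₁) : Multiset ℕ) = ↑(List.filterMap p T₂) := by
    intro p
    rw [← filterMap_coe_list, ← filterMap_coe_list, hms]
  have ha : a₁ = a₂ := by
    have := key pC
    rw [hT₁, hT₂] at this
    simp only [List.filterMap_append,
      lfm_eq pC cv (fun i => rfl), lfm_nil pC av (fun i => rfl), lfm_nil pC bv (fun i => rfl),
      List.nil_append, List.append_nil] at this
    simpa using this
  have hl : l₁ = l₂ := by
    have := key pA
    rw [hT₁, hT₂] at this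
    simp only [List.filterMap_append,
      lfm_eq pA av (fun i => rfl), lfm_nil pA bv (fun i => rfl), lfm_nil pA cv (fun i => rfl),
      List.nil_append, List.append_nil, Multiset.coe_eq_coe] at this
    exact List.Perm.eq_of_pairwise' hl₁ hl₂ this
  have hmb : (↑m₁ + {b₁} : Multiset ℕ) = ↑m₂ + {b₂} := by
    have := key pB
    rw [hT₁, hT₂] at this
    simp only [List.filterMap_append,
      lfm_eq pB bv (fun i => rfl), lfm_nil pB av (fun i => rfl), lfm_nil pB cv (fun i => rfl),
      List.nil_append, List.append_nil] at this
    rw [← Multiset.coe_singleton b₁, ← Multiset.coe_singleton b₂,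
      Multiset.coe_add, Multiset.coe_add]
    simpa using this
  have hb : b₁ = b₂ := by
    have h₁ : b₁ ≤ b₂ := by
      have hmem : b₁ ∈ (↑m₂ + {b₂} : Multiset ℕ) := by
        rw [← hmb]
        simp
      rcases Multiset.mem_add.1 hmem with hm | hm
      · exact hb₂ _ (by exact_mod_cast hm)
      · simp at hm; omega
    have h₂ : b₂ ≤ b₁ := by
      have hmem : b₂ ∈ (↑m₁ + {b₁} : Multiset ℕ) := by
        rw [hmb]
        simp
      rcases Multiset.mem_add.1 hmem with hm | hm
      · exact hb₁ _ (by exact_mod_cast hm)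
      · simp at hm; omega
    omega
  have hm : m₁ = m₂ := by
    subst hb
    have : (↑m₁ : Multiset ℕ) = ↑m₂ := by
      have := hmb
      exact add_right_cancel this
    exact List.Perm.eq_of_pairwise' hm₁ hm₂ (Multiset.coe_eq_coe.1 this)
  subst ha; subst hl; subst hb; subst hm; rfl

end Aux
namespace Aux
open MvPolynomial
variable (F : Type*) [Field F]

lemma hX (x : ℕ ⊕ ℕ ⊕ ℕ) : (X x : RP F) = monomial (Finsupp.single x 1) 1 := rfl

lemma psi_Yl : ∀ l : List ℕ, ∃ C : RP F,
    ψ F (Yl F l) = !![monomial (expA l) (1:F), C; 0, monomial (expA l) (1:F)]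
  | [] => by
    refine ⟨0, ?_⟩
    rw [Yl_nil, map_one, expA_nil]
    ext i j
    fin_cases i <;> fin_cases j <;> simp [Matrix.one_apply]
  | a :: t => by
    obtain ⟨C, hC⟩ := psi_Yl t
    refine ⟨X (av a) * C + X (cv a) * monomial (expA t) (1:F), ?_⟩
    rw [Yl_cons, map_mul, psi_y, hC, Ymat, Matrix.mul_fin_two, expA_cons]
    have hmul : (X (av a) : RP F) * monomial (expA t) 1
        = monomial (Finsupp.single (av a) 1 + expA t) 1 := by
      rw [hX, monomial_mul, one_mul]
    ext i j
    fin_cases i <;> fin_cases j <;> simp [hmul]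

lemma psi_Zl : ∀ m : List ℕ, ψ F (Zl F m) =
    !![monomial (expB m) (1:F), 0; 0, monomial (expB m) ((-1:F)^m.length)]
  | [] => by
    rw [Zl_nil, map_one, expB_nil]
    ext i j
    fin_cases i <;> fin_cases j <;> simp [Matrix.one_apply]
  | a :: t => by
    rw [Zl_cons, map_mul, psi_z, psi_Zl t, Zmat, Matrix.mul_fin_two, expB_cons]
    have h1 : (X (bv a) : RP F) * monomial (expB t) 1
        = monomial (Finsupp.single (bv a) 1 + expB t) 1 := by
      rw [hX, monomial_mul, one_mul]
    have h2 : -(X (bv a) : RP F) * monomial (expB t) ((-1:F)^t.length)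
        = monomial (Finsupp.single (bv a) 1 + expB t) ((-1:F)^(a :: t).length) := by
      rw [hX, neg_mul, monomial_mul, ← map_neg, List.length_cons]
      congr 1
      ring
    ext i j
    fin_cases i <;> fin_cases j <;> simp [h1, h2, List.length_cons]

lemma psi_cc (i j : ℕ) : ψ F (cc F i j) =
    !![0, monomial (Finsupp.single (cv i) 1 + Finsupp.single (bv j) 1) (-2:F); 0, 0] := by
  have hψcc : ψ F (cc F i j) = Ymat F i * Zmat F j - Zmat F j * Ymat F i := by
    rw [cc, map_sub, map_mul, map_mul, psi_y, psi_z]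
  have hXX : (X (cv i) : RP F) * X (bv j)
      = monomial (Finsupp.single (cv i) 1 + Finsupp.single (bv j) 1) 1 := by
    rw [hX, hX, monomial_mul, one_mul]
  have hm : (monomial (Finsupp.single (cv i) 1 + Finsupp.single (bv j) 1) (-2:F) : RP F)
      = -(X (cv i) * X (bv j)) - X (cv i) * X (bv j) := by
    rw [hXX, ← map_neg, ← map_sub]
    norm_num
  rw [hψcc, Ymat, Zmat, Matrix.mul_fin_two, Matrix.mul_fin_two]
  ext a b
  fin_cases a <;> fin_cases b <;> simp [Matrix.sub_apply, hm] <;> ring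

lemma psi_famA00 (t : IA) : (ψ F (fam F (Sum.inl t))) 0 0 = monomial (dA t) (1:F) := by
  obtain ⟨C, hC⟩ := psi_Yl F t.l
  show (ψ F (Yl F t.l * Zl F t.m)) 0 0 = _
  rw [map_mul, hC, psi_Zl, Matrix.mul_fin_two, dA]
  simp [monomial_mul]

lemma psi_famB (t : IB) :
    ψ F (fam F (Sum.inr t)) = !![0, monomial (dB t) (-2:F); 0, 0] := by
  obtain ⟨C, hC⟩ := psi_Yl F t.l
  have h1 : ψ F (fam F (Sum.inr t)) = ψ F (Yl F t.l) * ψ F (Zl F t.m) * ψ F (cc F t.a t.b) := by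
    rw [← map_mul, ← map_mul]
    rfl
  rw [h1, hC, psi_Zl, psi_cc, Matrix.mul_fin_two, Matrix.mul_fin_two]
  have hdB : (monomial (expA t.l) (1:F) : RP F) * monomial (expB t.m) (1:F) *
      monomial (Finsupp.single (cv t.a) 1 + Finsupp.single (bv t.b) 1) (-2:F)
      = monomial (dB t) (-2:F) := by
    rw [monomial_mul, monomial_mul, dB]
    norm_num
  ext i j
  fin_cases i <;> fin_cases j <;> simp [← hdB] <;> ring

noncomputable def coefLin (i j : Fin 2) (d : (ℕ ⊕ ℕ ⊕ ℕ) →₀ ℕ) :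
    Matrix (Fin 2) (Fin 2) (RP F) →ₗ[F] F where
  toFun M := coeff d (M i j)
  map_add' := by intros; simp [Matrix.add_apply, coeff_add]
  map_smul' := by intros; simp [Matrix.smul_apply, coeff_smul]

lemma coefLin_apply (i j : Fin 2) (d : (ℕ ⊕ ℕ ⊕ ℕ) →₀ ℕ) (M : Matrix (Fin 2) (Fin 2) (RP F)) :
    coefLin F i j d M = coeff d (M i j) := rfl

lemma indep (h2 : (2:F) ≠ 0) {g : FA F}
    (hg : g ∈ Submodule.span F (Set.range (fam F))) (hψ : ψ F g = 0) : g = 0 := by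
  obtain ⟨c, hc⟩ := Finsupp.mem_span_range_iff_exists_finsupp.1 hg
  rw [← hc] at hψ
  rw [map_finsuppSum] at hψ
  simp only [map_smul] at hψ
  have stage1 : ∀ t : IA, c (Sum.inl t) = 0 := by
    intro t0
    have h0 := congrArg (coefLin F 0 0 (dA t0)) hψ
    rw [map_finsuppSum, map_zero] at h0
    have hs : (c.sum fun i a => coefLin F 0 0 (dA t0) (a • ψ F (fam F i)))
        = c (Sum.inl t0) := by
      rw [Finsupp.sum_eq_single (Sum.inl t0)]
      · rw [map_smul, coefLin_apply, psi_famA00, coeff_monomial, if_pos rfl, smul_eq_mul,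
          mul_one]
      · intro b hb hbne
        rcases b with t | t
        · rw [map_smul, coefLin_apply, psi_famA00, coeff_monomial,
            if_neg (fun h => hbne (by rw [dA_inj h])), smul_eq_mul, mul_zero]
        · rw [map_smul, coefLin_apply, psi_famB]
          simp
      · intro _
        simp
    rw [hs] at h0
    exact h0
  have stage2 : ∀ t : IB, c (Sum.inr t) = 0 := by
    intro t0
    have h0 := congrArg (coefLin F 0 1 (dB t0)) hψ
    rw [map_finsuppSum, map_zero] at h0
    have hs : (c.sum fun i a => coefLin F 0 1 (dB t0) (a • ψ F (fam F i)))
        = c (Sum.inr t0) * (-2) := by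
      rw [Finsupp.sum_eq_single (Sum.inr t0)]
      · rw [map_smul, coefLin_apply, psi_famB]
        have : (!![0, monomial (dB t0) (-2:F); 0, 0] : Matrix _ _ (RP F)) 0 1
            = monomial (dB t0) (-2:F) := by simp
        rw [this, coeff_monomial, if_pos rfl, smul_eq_mul]
      · intro b hb hbne
        rcases b with t | t
        · exact absurd (stage1 t) hb
        · rw [map_smul, coefLin_apply, psi_famB]
          have : (!![0, monomial (dB t) (-2:F); 0, 0] : Matrix _ _ (RP F)) 0 1
              = monomial (dB t) (-2:F) := by simp
          rw [this, coeff_monomial, if_neg (fun h => hbne (by rw [dB_inj h])), smul_eq_mul,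
            mul_zero]
      · intro _
        simp
    rw [hs] at h0
    rcases mul_eq_zero.1 h0 with h | h
    · exact h
    · exact absurd h (by simpa [neg_eq_zero] using h2)
  have hc0 : c = 0 := by
    ext i
    rcases i with t | t
    · exact stage1 t
    · exact stage2 t
  rw [hc0, Finsupp.sum_zero_index] at hc
  exact hc.symm

end Aux
theorem stmt_7 (F : Type*) [Field F] [Infinite F] (hchar : ringChar F ≠ 2) :
    ∀ f : FA F, f ∈ IdWith F (starUT F) ↔
      f ∈ TwoSidedIdeal.span {a : FA F |
        (∃ g₁ g₂, IsSym F g₁ ∧ IsSym F g₂ ∧ a = g₁ * g₂ - g₂ * g₁) ∨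
        (∃ h₁ h₂, IsSkew F h₁ ∧ IsSkew F h₂ ∧ a = h₁ * h₂ - h₂ * h₁) ∨
        (∃ g₁ g₂ h₁ h₂, IsSym F g₁ ∧ IsSym F g₂ ∧ IsSkew F h₁ ∧ IsSkew F h₂ ∧
          a = (g₁ * h₁ - h₁ * g₁) * (g₂ * h₂ - h₂ * g₂)) ∨
        (∃ g₁ h₁ h₂, IsSym F g₁ ∧ IsSkew F h₁ ∧ IsSkew F h₂ ∧
          a = h₁ * g₁ * h₂ - h₂ * g₁ * h₁)} := by
  intro f
  have h2 : (2:F) ≠ 0 := Ring.two_ne_zero hchar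
  constructor
  · intro hf
    have hfId : ∀ φ : FA F →ₐ[F] ↥(UT2 F), IsSubstWith F (starUT F) φ → φ f = 0 := hf
    have hfM := Aux.all_mem_MM h2 f
    rw [Aux.MM] at hfM
    obtain ⟨g, hg, j, hj, hgj⟩ := Submodule.mem_sup.1 hfM
    have hjJ : j ∈ Aux.JJ F := hj
    have hψf : Aux.ψ F f = 0 := Aux.psi_zero_of_id F hfId
    have hψj : Aux.ψ F j = 0 := Aux.psi_zero_of_id F (Aux.JJ_le_Id h2 hjJ)
    have hψg : Aux.ψ F g = 0 := by
      have hsum : Aux.ψ F g + Aux.ψ F j = 0 := by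
        rw [← map_add, hgj, hψf]
      rw [hψj, add_zero] at hsum
      exact hsum
    have hg0 : g = 0 := Aux.indep F h2 hg hψg
    have hfj : f = j := by rw [← hgj, hg0, zero_add]
    rw [hfj]
    exact hjJ
  · intro hf
    have hfJ : f ∈ Aux.JJ F := hf
    intro φ hφ
    exact Aux.JJ_le_Id h2 hfJ φ hφ
end

section
/- Let F be a field with char(F) = p > 2. If Y ∈ UT_2(F) is symmetric for ⋆, then Y^p lies in the center Z(UT_2(F)). -/
open scoped BigOperators

set_option maxHeartbeats 1000000
set_option synthInstance.maxHeartbeats 400000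

theorem stmt_9 (F : Type*) [Field F] (p : ℕ) [CharP F p] (hp : 2 < p)
    (Y : ↥(UT2 F)) (hY : starUT F Y = Y) :
    Y ^ p ∈ Subalgebra.center F ↥(UT2 F) := by
  haveI : Fact p.Prime := ⟨CharP.char_is_prime_of_two_le F p hp.le⟩
  haveI : CharP ↥(UT2 F) p :=
    charP_of_injective_algebraMap (algebraMap F ↥(UT2 F)).injective p
  set a : F := Y.1 0 0 with ha
  have hdiag : Y.1 1 1 = a := by
    have := congrArg (fun M => M.1 0 0) hY
    simpa [starUT] using this
  set N : ↥(UT2 F) := Y - algebraMap F ↥(UT2 F) a with hN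
  have hN10 : Y.1 1 0 = 0 := Y.2
  have hNsq : N * N = 0 := by
    apply Subtype.ext
    have hval : (N : Matrix (Fin 2) (Fin 2) F) = Y.1 - a • 1 := by
      simp [hN, Algebra.algebraMap_eq_smul_one]
    show (N : Matrix (Fin 2) (Fin 2) F) * (N : Matrix (Fin 2) (Fin 2) F) = 0
    ext i j
    fin_cases i <;> fin_cases j <;>
      simp [hval, Matrix.mul_apply, Fin.sum_univ_two, Matrix.sub_apply,
        Matrix.smul_apply, Matrix.one_apply, hN10, hdiag, ha]
  have hcomm : Commute (algebraMap F ↥(UT2 F) a) N := Algebra.commutes a N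
  have hY' : Y = algebraMap F ↥(UT2 F) a + N := by rw [hN]; abel
  have hNp : N ^ p = 0 := by
    have h2 : N ^ 2 = 0 := by rw [sq]; exact hNsq
    calc N ^ p = N ^ 2 * N ^ (p - 2) := by rw [← pow_add]; congr 1; omega
    _ = 0 := by rw [h2, zero_mul]
  rw [hY', add_pow_char_of_commute p hcomm, hNp, add_zero, ← map_pow]
  exact Subalgebra.algebraMap_mem _ _
end
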